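/- arXiv:0807.1416 — 5 statements merged into one kernel-verified Lean document; each statement's English description precedes it below -/
import Mathlib

section
/- Doubling-of-variables limit lemma, part (i): with the notation below, the iterated limits taken first in ε and then in η satisfy liminf_{η→0} liminf_{ε→0} M_{ε,η} = limsup_{η→0} limsup_{ε→0} M_{ε,η} = M, and for any choice of maximum points (t^{ε,η}, x^{ε,η}, y^{ε,η}) of Ψ_{ε,η}, liminf_{η→0} liminf_{ε→0} [ū(t^{ε,η},x^{ε,η}) − v̄(t^{ε,η},y^{ε,η})] = limsup_{η→0} limsup_{ε→0} [ū(t^{ε,η},x^{ε,η}) − v̄(t^{ε,η},y^{ε,η})] = M. -/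
open Set Filter Topology

noncomputable section

/-- Euclidean space `ℝⁿ`. -/
abbrev En (n : ℕ) : Type := EuclideanSpace ℝ (Fin n)

/-- Frobenius norm of a matrix. -/
noncomputable def frobNorm {n d : ℕ} (M : Matrix (Fin n) (Fin d) ℝ) : ℝ :=
  Real.sqrt (∑ i, ∑ j, (M i j) ^ 2)

/-- Row vector `q` multiplied by the matrix `M`. -/
def rowMul {n d : ℕ} (q : En n) (M : Matrix (Fin n) (Fin d) ℝ) : En d :=
  WithLp.toLp 2 (fun j => ∑ i, q i * M i j)

/-- The lower Hamiltonian `H⁻ = sup_α inf_β [½Tr(σσᵀX) + ⟨b,q⟩ + f(t,x,r,qσ,α,β)]`,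
for a generic generator `f`. -/
noncomputable def Hinf {n d : ℕ} (A B : Type)
    (b : ℝ → En n → A → B → En n)
    (σm : ℝ → En n → A → B → Matrix (Fin n) (Fin d) ℝ)
    (f : ℝ → En n → ℝ → En d → A → B → ℝ)
    (t : ℝ) (x : En n) (r : ℝ) (q : En n) (X : Matrix (Fin n) (Fin n) ℝ) : ℝ :=
  ⨆ α : A, ⨅ β : B,
    (1 / 2) * Matrix.trace (σm t x α β * (σm t x α β).transpose * X)
      + (inner ℝ (b t x α β) q : ℝ)
      + f t x r (rowMul q (σm t x α β)) α β

/-- The upper Hamiltonian `H⁺ = inf_β sup_α [...]`. -/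
noncomputable def Hsup {n d : ℕ} (A B : Type)
    (b : ℝ → En n → A → B → En n)
    (σm : ℝ → En n → A → B → Matrix (Fin n) (Fin d) ℝ)
    (f : ℝ → En n → ℝ → En d → A → B → ℝ)
    (t : ℝ) (x : En n) (r : ℝ) (q : En n) (X : Matrix (Fin n) (Fin n) ℝ) : ℝ :=
  ⨅ β : B, ⨆ α : A,
    (1 / 2) * Matrix.trace (σm t x α β * (σm t x α β).transpose * X)
      + (inner ℝ (b t x α β) q : ℝ)
      + f t x r (rowMul q (σm t x α β)) α β

/-- `φ` is of class `C^{1,2}` on `[0,T)×ℝⁿ`, with time derivative `φt`,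
spatial gradient `Dφ` and spatial Hessian `D2φ`, all continuous on `[0,T)×ℝⁿ`. -/
structure IsC12 (T : ℝ) {n : ℕ} (φ φt : ℝ → En n → ℝ) (Dφ : ℝ → En n → En n)
    (D2φ : ℝ → En n → Matrix (Fin n) (Fin n) ℝ) : Prop where
  cont : ContinuousOn (fun p : ℝ × En n => φ p.1 p.2) (Ico 0 T ×ˢ univ)
  cont_t : ContinuousOn (fun p : ℝ × En n => φt p.1 p.2) (Ico 0 T ×ˢ univ)
  cont_D : ContinuousOn (fun p : ℝ × En n => Dφ p.1 p.2) (Ico 0 T ×ˢ univ)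
  cont_D2 : ContinuousOn (fun p : ℝ × En n => D2φ p.1 p.2) (Ico 0 T ×ˢ univ)
  deriv_t : ∀ t ∈ Ico (0 : ℝ) T, ∀ x : En n,
    HasDerivWithinAt (fun s => φ s x) (φt t x) (Ico 0 T) t
  grad_x : ∀ t ∈ Ico (0 : ℝ) T, ∀ x : En n, HasGradientAt (fun y => φ t y) (Dφ t x) x
  hess_x : ∀ t ∈ Ico (0 : ℝ) T, ∀ x : En n,
    HasFDerivAt (fun y => Dφ t y)
      (LinearMap.toContinuousLinearMap (Matrix.toEuclideanLin (D2φ t x))) x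

/-- `u` is a viscosity subsolution of the obstacle equation
`min{u-ℓ, max{-∂u/∂t - H(t,x,u,Du,D²u), u-ℓ'}} = 0` on `[0,T)×ℝⁿ`, `u(T,·) = G`. -/
def IsSubsolution (T : ℝ) {n : ℕ}
    (H : ℝ → En n → ℝ → En n → Matrix (Fin n) (Fin n) ℝ → ℝ)
    (ℓ ℓ' : ℝ → En n → ℝ) (G : En n → ℝ) (u : ℝ → En n → ℝ) : Prop :=
  UpperSemicontinuousOn (fun p : ℝ × En n => u p.1 p.2) (Icc 0 T ×ˢ univ)
  ∧ (∀ x : En n, u T x ≤ G x)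
  ∧ ∀ (φ φt : ℝ → En n → ℝ) (Dφ : ℝ → En n → En n)
      (D2φ : ℝ → En n → Matrix (Fin n) (Fin n) ℝ),
      IsC12 T φ φt Dφ D2φ →
      ∀ t ∈ Ico (0 : ℝ) T, ∀ x : En n,
        (∀ s ∈ Ico (0 : ℝ) T, ∀ y : En n, u s y - φ s y ≤ u t x - φ t x) →
        min (u t x - ℓ t x)
          (max (-(φt t x) - H t x (u t x) (Dφ t x) (D2φ t x)) (u t x - ℓ' t x)) ≤ 0

/-- `u` is a viscosity supersolution of the obstacle equation. -/
def IsSupersolution (T : ℝ) {n : ℕ}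
    (H : ℝ → En n → ℝ → En n → Matrix (Fin n) (Fin n) ℝ → ℝ)
    (ℓ ℓ' : ℝ → En n → ℝ) (G : En n → ℝ) (u : ℝ → En n → ℝ) : Prop :=
  LowerSemicontinuousOn (fun p : ℝ × En n => u p.1 p.2) (Icc 0 T ×ˢ univ)
  ∧ (∀ x : En n, G x ≤ u T x)
  ∧ ∀ (φ φt : ℝ → En n → ℝ) (Dφ : ℝ → En n → En n)
      (D2φ : ℝ → En n → Matrix (Fin n) (Fin n) ℝ),
      IsC12 T φ φt Dφ D2φ →
      ∀ t ∈ Ico (0 : ℝ) T, ∀ x : En n,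
        (∀ s ∈ Ico (0 : ℝ) T, ∀ y : En n, u t x - φ t x ≤ u s y - φ s y) →
        0 ≤ min (u t x - ℓ t x)
          (max (-(φt t x) - H t x (u t x) (Dφ t x) (D2φ t x)) (u t x - ℓ' t x))

/-- Hypothesis (H1): continuity of `b`, `σ` on `[0,T]×ℝⁿ×A×B` and uniform
Lipschitz continuity in `x`. -/
def HypH1 {n d : ℕ} (T : ℝ) (A B : Type) [TopologicalSpace A] [TopologicalSpace B]
    (b : ℝ → En n → A → B → En n)
    (σm : ℝ → En n → A → B → Matrix (Fin n) (Fin d) ℝ) : Prop :=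
  ContinuousOn (fun p : ℝ × En n × A × B => b p.1 p.2.1 p.2.2.1 p.2.2.2)
      (Icc 0 T ×ˢ (univ : Set (En n × A × B)))
  ∧ ContinuousOn (fun p : ℝ × En n × A × B => σm p.1 p.2.1 p.2.2.1 p.2.2.2)
      (Icc 0 T ×ˢ (univ : Set (En n × A × B)))
  ∧ ∃ CL > (0 : ℝ), ∀ t ∈ Icc (0 : ℝ) T, ∀ (x x' : En n) (α : A) (β : B),
      ‖b t x α β - b t x' α β‖ + frobNorm (σm t x α β - σm t x' α β) ≤ CL * ‖x - x'‖

/-- Hypothesis (H2): `g`, `h`, `h'` continuous and bounded, `h < h'`,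
`h(T,·) ≤ g ≤ h'(T,·)`; `F` continuous with quadratic growth in `z`
with constant `C`. -/
def HypH2 {n d : ℕ} (T C : ℝ) (A B : Type) [TopologicalSpace A] [TopologicalSpace B]
    (g : En n → ℝ) (h h' : ℝ → En n → ℝ)
    (F : ℝ → En n → ℝ → En d → A → B → ℝ) : Prop :=
  Continuous g ∧ (∃ M, ∀ x : En n, |g x| ≤ M)
  ∧ ContinuousOn (fun p : ℝ × En n => h p.1 p.2) (Icc 0 T ×ˢ univ)
  ∧ ContinuousOn (fun p : ℝ × En n => h' p.1 p.2) (Icc 0 T ×ˢ univ)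
  ∧ (∃ M, ∀ t ∈ Icc (0 : ℝ) T, ∀ x : En n, |h t x| ≤ M ∧ |h' t x| ≤ M)
  ∧ (∀ t ∈ Icc (0 : ℝ) T, ∀ x : En n, h t x < h' t x)
  ∧ (∀ x : En n, h T x ≤ g x ∧ g x ≤ h' T x)
  ∧ ContinuousOn
      (fun p : ℝ × En n × ℝ × En d × A × B =>
        F p.1 p.2.1 p.2.2.1 p.2.2.2.1 p.2.2.2.2.1 p.2.2.2.2.2)
      (Icc 0 T ×ˢ (univ : Set (En n × ℝ × En d × A × B)))
  ∧ 0 < C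
  ∧ ∀ t ∈ Icc (0 : ℝ) T, ∀ (x : En n) (y : ℝ) (z : En d) (α : A) (β : B),
      |F t x y z α β| ≤ C * (1 + ‖z‖ ^ 2)

/-- Hypothesis (H3): `F` is differentiable in `(x,y,z)`, with
`|∂F/∂x|, |∂F/∂z| ≤ C(1+|z|²)` and `∂F/∂y ≤ C_ε + ε|z|²` for every `ε > 0`. -/
def HypH3 {n d : ℕ} (T C : ℝ) (A B : Type)
    (F : ℝ → En n → ℝ → En d → A → B → ℝ) : Prop :=
  ∃ (Fx : ℝ → En n → ℝ → En d → A → B → En n)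
    (Fy : ℝ → En n → ℝ → En d → A → B → ℝ)
    (Fz : ℝ → En n → ℝ → En d → A → B → En d),
    (∀ t ∈ Icc (0 : ℝ) T, ∀ (x : En n) (y : ℝ) (z : En d) (α : A) (β : B),
      HasGradientAt (fun x' => F t x' y z α β) (Fx t x y z α β) x
      ∧ HasDerivAt (fun y' => F t x y' z α β) (Fy t x y z α β) y
      ∧ HasGradientAt (fun z' => F t x y z' α β) (Fz t x y z α β) z
      ∧ ‖Fx t x y z α β‖ ≤ C * (1 + ‖z‖ ^ 2)
      ∧ ‖Fz t x y z α β‖ ≤ C * (1 + ‖z‖ ^ 2))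
    ∧ ∀ ε > (0 : ℝ), ∃ Cε > (0 : ℝ), ∀ t ∈ Icc (0 : ℝ) T,
        ∀ (x : En n) (y : ℝ) (z : En d) (α : A) (β : B),
          Fy t x y z α β ≤ Cε + ε * ‖z‖ ^ 2

/-- The function `ρ(x) = (1/λ) ln((e^{λγx}+1)/γ)`. -/
noncomputable def rho (γ lam : ℝ) (x : ℝ) : ℝ :=
  (1 / lam) * Real.log ((Real.exp (lam * γ * x) + 1) / γ)

/-- `ρ'`. -/
noncomputable def rho' (γ lam : ℝ) : ℝ → ℝ := deriv (rho γ lam)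

/-- `ρ''`. -/
noncomputable def rho'' (γ lam : ℝ) : ℝ → ℝ := deriv (rho' γ lam)

/-- The transformed generator
`F̄(t,x,ū,z̄) = (ρ''(ū)/ρ'(ū))|z̄|² − Kρ(ū)/ρ'(ū) + (e^{Kt}/ρ'(ū)) F(t,x,e^{−Kt}ρ(ū)+C̃,e^{−Kt}ρ'(ū)z̄)`. -/
noncomputable def Fbar {n d : ℕ} {A B : Type} (γ lam K Ct : ℝ)
    (F : ℝ → En n → ℝ → En d → A → B → ℝ)
    (t : ℝ) (x : En n) (ub : ℝ) (zb : En d) (α : A) (β : B) : ℝ :=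
  (rho'' γ lam ub / rho' γ lam ub) * ‖zb‖ ^ 2
    - K * rho γ lam ub / rho' γ lam ub
    + (Real.exp (K * t) / rho' γ lam ub)
      * F t x (Real.exp (-(K * t)) * rho γ lam ub + Ct)
          ((Real.exp (-(K * t)) * rho' γ lam ub) • zb) α β

/-- The change of variable `ū(t,x) = ρ⁻¹(e^{Kt}(u(t,x) − C̃))`. -/
noncomputable def transf {n : ℕ} (γ lam K Ct : ℝ) (u : ℝ → En n → ℝ) : ℝ → En n → ℝ :=
  fun t x => Function.invFun (rho γ lam) (Real.exp (K * t) * (u t x - Ct))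

/-- `(p,q,X)` belongs to the second-order parabolic superjet `𝒫^{2,+}u(t₀,x₀)`. -/
def ParabSuperjet (T : ℝ) {n : ℕ} (u : ℝ → En n → ℝ) (t0 : ℝ) (x0 : En n)
    (p : ℝ) (q : En n) (X : Matrix (Fin n) (Fin n) ℝ) : Prop :=
  X.IsSymm ∧
  ∀ ε > (0 : ℝ), ∃ δ > (0 : ℝ), ∀ t ∈ Ico (0 : ℝ) T, ∀ x : En n,
    |t - t0| < δ → ‖x - x0‖ < δ →
    u t x ≤ u t0 x0 + p * (t - t0) + (inner ℝ q (x - x0) : ℝ)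
      + (1 / 2) * (inner ℝ (Matrix.toEuclideanLin X (x - x0)) (x - x0) : ℝ)
      + ε * (|t - t0| + ‖x - x0‖ ^ 2)

/-- The parabolic subjet `𝒫^{2,−}u = −𝒫^{2,+}(−u)`. -/
def ParabSubjet (T : ℝ) {n : ℕ} (u : ℝ → En n → ℝ) (t0 : ℝ) (x0 : En n)
    (p : ℝ) (q : En n) (X : Matrix (Fin n) (Fin n) ℝ) : Prop :=
  ParabSuperjet T (fun t x => -(u t x)) t0 x0 (-p) (-q) (-X)

/-- The closure `𝒫̄^{2,+}u(t₀,x₀)` of the parabolic superjet. -/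
def ClosedParabSuperjet (T : ℝ) {n : ℕ} (u : ℝ → En n → ℝ) (t0 : ℝ) (x0 : En n)
    (p : ℝ) (q : En n) (X : Matrix (Fin n) (Fin n) ℝ) : Prop :=
  ∃ (tk : ℕ → ℝ) (xk : ℕ → En n) (pk : ℕ → ℝ) (qk : ℕ → En n)
    (Xk : ℕ → Matrix (Fin n) (Fin n) ℝ),
    (∀ k, tk k ∈ Ico (0 : ℝ) T ∧ ParabSuperjet T u (tk k) (xk k) (pk k) (qk k) (Xk k))
    ∧ Tendsto tk atTop (nhds t0) ∧ Tendsto xk atTop (nhds x0)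
    ∧ Tendsto (fun k => u (tk k) (xk k)) atTop (nhds (u t0 x0))
    ∧ Tendsto pk atTop (nhds p) ∧ Tendsto qk atTop (nhds q)
    ∧ Tendsto Xk atTop (nhds X)

/-- The doubled and penalized function
`Ψ_{ε,η}(t,x,y) = ū(t,x) − v̄(t,y) − |x−y|²/ε² − η(|x|²+|y|²)`. -/
noncomputable def Psi {n : ℕ} (ub vb : ℝ → En n → ℝ) (ε η : ℝ)
    (t : ℝ) (x y : En n) : ℝ :=
  ub t x - vb t y - ‖x - y‖ ^ 2 / ε ^ 2 - η * (‖x‖ ^ 2 + ‖y‖ ^ 2)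

/-- The exponentially transformed generator
`f(t,x,y,z) = 2Cy[F(t,x,(ln y)/(2C), z/(2Cy)) − |z|²/(4Cy²)]` for `y > 0`, `0` otherwise. -/
noncomputable def expGen {n d : ℕ} {A B : Type} (C : ℝ)
    (F : ℝ → En n → ℝ → En d → A → B → ℝ)
    (t : ℝ) (x : En n) (y : ℝ) (z : En d) (α : A) (β : B) : ℝ :=
  if 0 < y then
    2 * C * y * (F t x (Real.log y / (2 * C)) ((1 / (2 * C * y)) • z) α β
      - ‖z‖ ^ 2 / (4 * C * y ^ 2))
  else 0

private lemma key_lemma {n : ℕ} {T : ℝ} (hT : 0 < T)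
    {ub vb : ℝ → En n → ℝ} {Bu Bv : ℝ}
    (hBu : ∀ t ∈ Icc (0:ℝ) T, ∀ x : En n, |ub t x| ≤ Bu)
    (hBv : ∀ t ∈ Icc (0:ℝ) T, ∀ x : En n, |vb t x| ≤ Bv)
    (husc : UpperSemicontinuousOn (fun p : ℝ × En n => ub p.1 p.2) (Icc 0 T ×ˢ univ))
    (hlsc : LowerSemicontinuousOn (fun p : ℝ × En n => vb p.1 p.2) (Icc 0 T ×ˢ univ))
    {M : ℝ}
    (hM : M = sSup ((fun p : ℝ × En n => ub p.1 p.2 - vb p.1 p.2) '' (Icc 0 T ×ˢ univ)))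
    {pt : ℝ → ℝ → ℝ} {px py : ℝ → ℝ → En n}
    (hmax : ∀ ε > (0:ℝ), ∀ η > (0:ℝ),
      pt ε η ∈ Icc (0:ℝ) T ∧
      ∀ t ∈ Icc (0:ℝ) T, ∀ x y : En n,
        Psi ub vb ε η t x y ≤ Psi ub vb ε η (pt ε η) (px ε η) (py ε η))
    {η : ℝ} (hη : 0 < η) {c : ℝ} (hc : M < c) :
    ∀ᶠ ε in 𝓝[>] (0:ℝ), ub (pt ε η) (px ε η) - vb (pt ε η) (py ε η) ≤ c := by
  set B := Bu + Bv with hBdef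
  have h0T : (0:ℝ) ∈ Icc (0:ℝ) T := ⟨le_rfl, hT.le⟩
  have hDbd : ∀ t ∈ Icc (0:ℝ) T, ∀ x y : En n,
      -B ≤ ub t x - vb t y ∧ ub t x - vb t y ≤ B := by
    intro t ht x y
    have h1 := abs_le.mp (hBu t ht x)
    have h2 := abs_le.mp (hBv t ht y)
    constructor
    · simp only [hBdef]; linarith
    · simp only [hBdef]; linarith
  have hB0 : 0 ≤ B := by
    have := hDbd 0 h0T 0 0; linarith [this.1, this.2]
  have hpen : ∀ ε > (0:ℝ), ‖px ε η - py ε η‖^2/ε^2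
      + η*(‖px ε η‖^2 + ‖py ε η‖^2) ≤ 2*B := by
    intro ε hε
    have h1 := (hmax ε hε η hη).2 0 h0T 0 0
    have hI := (hmax ε hε η hη).1
    have hd := (hDbd _ hI (px ε η) (py ε η)).2
    have hd0 := (hDbd 0 h0T 0 0).1
    simp only [Psi, sub_self, norm_zero] at h1
    have hz : (0:ℝ)^2 / ε^2 = 0 := by
      simp
    rw [hz] at h1
    linarith
  -- contradiction setup
  by_contra hcon
  rw [Filter.not_eventually] at hcon
  have hfreq : ∃ᶠ ε in 𝓝[>] (0:ℝ),
      0 < ε ∧ c < ub (pt ε η) (px ε η) - vb (pt ε η) (py ε η) := by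
    refine (hcon.and_eventually self_mem_nhdsWithin).mono ?_
    rintro ε ⟨h1, h2⟩
    exact ⟨h2, lt_of_not_ge h1⟩
  obtain ⟨e, heF, he⟩ := frequently_iff_seq_forall.mp hfreq
  have he0 : Tendsto e atTop (𝓝 0) := heF.mono_right nhdsWithin_le_nhds
  set tk : ℕ → ℝ := fun k => pt (e k) η with htk
  set xk : ℕ → En n := fun k => px (e k) η with hxkdef
  set yk : ℕ → En n := fun k => py (e k) η with hykdef
  have htkI : ∀ k, tk k ∈ Icc (0:ℝ) T := fun k => (hmax (e k) (he k).1 η hη).1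
  have hq0 : ∀ k, (0:ℝ) ≤ ‖xk k - yk k‖^2/(e k)^2 := by
    intro k; positivity
  have hs0 : ∀ k, (0:ℝ) ≤ η * (‖xk k‖^2 + ‖yk k‖^2) := by
    intro k; positivity
  have hxk : ∀ k, ‖xk k‖^2 ≤ 2*B/η := by
    intro k
    have h := hpen (e k) (he k).1
    rw [le_div_iff₀ hη]
    nlinarith [hq0 k, sq_nonneg (‖yk k‖)]
  have hxy : ∀ k, ‖xk k - yk k‖ ≤ Real.sqrt (2*B) * e k := by
    intro k
    have h := hpen (e k) (he k).1
    have hek := (he k).1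
    have h2 : ‖xk k - yk k‖^2 ≤ 2*B * (e k)^2 := by
      have hs := hs0 k
      have he2 : (0:ℝ) < (e k)^2 := by positivity
      have hq : ‖xk k - yk k‖^2/(e k)^2 ≤ 2*B := by linarith
      rw [div_le_iff₀ he2] at hq
      linarith

    calc ‖xk k - yk k‖ = Real.sqrt (‖xk k - yk k‖^2) := by
            rw [Real.sqrt_sq (norm_nonneg _)]
      _ ≤ Real.sqrt (2*B * (e k)^2) := Real.sqrt_le_sqrt h2
      _ = Real.sqrt (2*B) * e k := by
            rw [Real.sqrt_mul (by linarith), Real.sqrt_sq hek.le]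
  set R := Real.sqrt (2*B/η) with hR
  have hxkR : ∀ k, xk k ∈ Metric.closedBall (0:En n) R := by
    intro k
    rw [Metric.mem_closedBall, dist_zero_right, hR]
    have h1 := hxk k
    nlinarith [Real.sq_sqrt (show (0:ℝ) ≤ 2*B/η by positivity),
      Real.sqrt_nonneg (2*B/η), norm_nonneg (xk k)]
  have hcpt : IsCompact (Icc (0:ℝ) T ×ˢ Metric.closedBall (0:En n) R) :=
    isCompact_Icc.prod (isCompact_closedBall _ _)
  obtain ⟨⟨t0, x0⟩, hmem0, φ, hφ, hconv⟩ :=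
    hcpt.tendsto_subseq (x := fun k => (tk k, xk k)) (fun k => ⟨htkI k, hxkR k⟩)
  have ht0 : Tendsto (fun k => tk (φ k)) atTop (𝓝 t0) :=
    (continuous_fst.tendsto _).comp hconv
  have hx0 : Tendsto (fun k => xk (φ k)) atTop (𝓝 x0) :=
    (continuous_snd.tendsto _).comp hconv
  have heφ : Tendsto (fun k => e (φ k)) atTop (𝓝 0) := he0.comp hφ.tendsto_atTop
  have hdiff : Tendsto (fun k => xk (φ k) - yk (φ k)) atTop (𝓝 0) := by
    apply squeeze_zero_norm (fun k => hxy (φ k))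
    simpa using heφ.const_mul (Real.sqrt (2*B))
  have hy0 : Tendsto (fun k => yk (φ k)) atTop (𝓝 x0) := by
    have h := hx0.sub hdiff
    simp only [sub_sub_cancel, sub_zero] at h
    exact h
  have hmemS : (t0, x0) ∈ Icc (0:ℝ) T ×ˢ (univ : Set (En n)) :=
    ⟨hmem0.1, mem_univ _⟩
  set δ := (c - M)/2 with hδdef
  have hδ : 0 < δ := by rw [hδdef]; linarith
  have hub := husc (t0, x0) hmemS (ub t0 x0 + δ) (lt_add_of_pos_right _ hδ)
  have hvb := hlsc (t0, x0) hmemS (vb t0 x0 - δ) (sub_lt_self _ hδ)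
  have htx : Tendsto (fun k => ((tk (φ k)), (xk (φ k)))) atTop
      (𝓝[Icc (0:ℝ) T ×ˢ (univ : Set (En n))] (t0, x0)) := by
    rw [tendsto_nhdsWithin_iff]
    exact ⟨ht0.prodMk_nhds hx0, Eventually.of_forall fun k => ⟨htkI (φ k), mem_univ _⟩⟩
  have hty : Tendsto (fun k => ((tk (φ k)), (yk (φ k)))) atTop
      (𝓝[Icc (0:ℝ) T ×ˢ (univ : Set (En n))] (t0, x0)) := by
    rw [tendsto_nhdsWithin_iff]
    exact ⟨ht0.prodMk_nhds hy0, Eventually.of_forall fun k => ⟨htkI (φ k), mem_univ _⟩⟩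
  have h1 := htx.eventually hub
  have h2 := hty.eventually hvb
  have hMle : ub t0 x0 - vb t0 x0 ≤ M := by
    rw [hM]
    refine le_csSup ⟨B, ?_⟩ ⟨(t0,x0), hmemS, rfl⟩
    rintro z ⟨⟨t,x⟩, hp, rfl⟩
    exact (hDbd t hp.1 x x).2
  obtain ⟨k, hk1, hk2⟩ := (h1.and h2).exists
  have hk3 := (he (φ k)).2
  simp only at hk1 hk2
  have h2δ : M + 2*δ = c := by rw [hδdef]; ring
  linarith


/-- Doubling-of-variables limit lemma, part (i): iterated limits
first in `ε` and then in `η`. -/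
theorem doubling_limits_i
    {n : ℕ} (hn : 1 ≤ n) (T : ℝ) (hT : 0 < T)
    (ub vb : ℝ → En n → ℝ)
    (hubd : ∃ M, ∀ t ∈ Icc (0:ℝ) T, ∀ x : En n, |ub t x| ≤ M)
    (hvbd : ∃ M, ∀ t ∈ Icc (0:ℝ) T, ∀ x : En n, |vb t x| ≤ M)
    (husc : UpperSemicontinuousOn (fun p : ℝ × En n => ub p.1 p.2) (Icc 0 T ×ˢ univ))
    (hlsc : LowerSemicontinuousOn (fun p : ℝ × En n => vb p.1 p.2) (Icc 0 T ×ˢ univ))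
    (M : ℝ)
    (hM : M = sSup ((fun p : ℝ × En n => ub p.1 p.2 - vb p.1 p.2) '' (Icc 0 T ×ˢ univ)))
    (pt : ℝ → ℝ → ℝ) (px py : ℝ → ℝ → En n)
    (hmax : ∀ ε > (0:ℝ), ∀ η > (0:ℝ),
      pt ε η ∈ Icc (0:ℝ) T ∧
      ∀ t ∈ Icc (0:ℝ) T, ∀ x y : En n,
        Psi ub vb ε η t x y ≤ Psi ub vb ε η (pt ε η) (px ε η) (py ε η))
 :
    (Filter.liminf (fun η => Filter.liminf
        (fun ε => Psi ub vb ε η (pt ε η) (px ε η) (py ε η)) (𝓝[>] (0:ℝ)))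
        (𝓝[>] (0:ℝ)) = M)
    ∧ (Filter.limsup (fun η => Filter.limsup
        (fun ε => Psi ub vb ε η (pt ε η) (px ε η) (py ε η)) (𝓝[>] (0:ℝ)))
        (𝓝[>] (0:ℝ)) = M)
    ∧ (Filter.liminf (fun η => Filter.liminf
        (fun ε => ub (pt ε η) (px ε η) - vb (pt ε η) (py ε η)) (𝓝[>] (0:ℝ)))
        (𝓝[>] (0:ℝ)) = M)
    ∧ (Filter.limsup (fun η => Filter.limsup
        (fun ε => ub (pt ε η) (px ε η) - vb (pt ε η) (py ε η)) (𝓝[>] (0:ℝ)))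
        (𝓝[>] (0:ℝ)) = M) := by
  obtain ⟨Bu, hBu⟩ := hubd
  obtain ⟨Bv, hBv⟩ := hvbd
  set B := Bu + Bv with hBdef
  have h0T : (0:ℝ) ∈ Icc (0:ℝ) T := ⟨le_rfl, hT.le⟩
  have hDbd : ∀ t ∈ Icc (0:ℝ) T, ∀ x y : En n,
      -B ≤ ub t x - vb t y ∧ ub t x - vb t y ≤ B := by
    intro t ht x y
    have h1 := abs_le.mp (hBu t ht x)
    have h2 := abs_le.mp (hBv t ht y)
    constructor
    · simp only [hBdef]; linarith
    · simp only [hBdef]; linarith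
  have hεpos : ∀ᶠ ε in 𝓝[>] (0:ℝ), (0:ℝ) < ε := self_mem_nhdsWithin
  have hηpos : ∀ᶠ η in 𝓝[>] (0:ℝ), (0:ℝ) < η := self_mem_nhdsWithin
  have hfacts : ∀ ε > (0:ℝ), ∀ η > (0:ℝ),
      -B ≤ Psi ub vb ε η (pt ε η) (px ε η) (py ε η)
      ∧ Psi ub vb ε η (pt ε η) (px ε η) (py ε η)
          ≤ ub (pt ε η) (px ε η) - vb (pt ε η) (py ε η)
      ∧ ub (pt ε η) (px ε η) - vb (pt ε η) (py ε η) ≤ B := by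
    intro ε hε η hη
    have h1 := (hmax ε hε η hη).2 0 h0T 0 0
    have hI := (hmax ε hε η hη).1
    have hd := hDbd _ hI (px ε η) (py ε η)
    have hd0 := (hDbd 0 h0T 0 0).1
    have hq : (0:ℝ) ≤ ‖px ε η - py ε η‖^2 / ε^2 := by positivity
    have hs : (0:ℝ) ≤ η * (‖px ε η‖^2 + ‖py ε η‖^2) := by positivity
    simp only [Psi, sub_self, norm_zero] at h1
    have hz : (0:ℝ)^2 / ε^2 = 0 := by simp
    rw [hz] at h1
    refine ⟨?_, ?_, hd.2⟩
    · simp only [Psi]; linarith [hd.2]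
    · simp only [Psi]; linarith
  set gPinf : ℝ → ℝ := fun η => Filter.liminf
      (fun ε => Psi ub vb ε η (pt ε η) (px ε η) (py ε η)) (𝓝[>] (0:ℝ)) with hgPinf
  set gPsup : ℝ → ℝ := fun η => Filter.limsup
      (fun ε => Psi ub vb ε η (pt ε η) (px ε η) (py ε η)) (𝓝[>] (0:ℝ)) with hgPsup
  set gDinf : ℝ → ℝ := fun η => Filter.liminf
      (fun ε => ub (pt ε η) (px ε η) - vb (pt ε η) (py ε η)) (𝓝[>] (0:ℝ)) with hgDinf
  set gDsup : ℝ → ℝ := fun η => Filter.limsup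
      (fun ε => ub (pt ε η) (px ε η) - vb (pt ε η) (py ε η)) (𝓝[>] (0:ℝ)) with hgDsup
  have hbd1 : ∀ η > (0:ℝ), IsBoundedUnder (· ≤ ·) (𝓝[>] (0:ℝ))
      (fun ε => Psi ub vb ε η (pt ε η) (px ε η) (py ε η)) := fun η hη =>
    isBoundedUnder_of_eventually_le (hεpos.mono fun ε hε =>
      ((hfacts ε hε η hη).2.1).trans (hfacts ε hε η hη).2.2)
  have hbd2 : ∀ η > (0:ℝ), IsBoundedUnder (· ≥ ·) (𝓝[>] (0:ℝ))
      (fun ε => Psi ub vb ε η (pt ε η) (px ε η) (py ε η)) := fun η hη =>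
    isBoundedUnder_of_eventually_ge (hεpos.mono fun ε hε => (hfacts ε hε η hη).1)
  have hbd3 : ∀ η > (0:ℝ), IsBoundedUnder (· ≤ ·) (𝓝[>] (0:ℝ))
      (fun ε => ub (pt ε η) (px ε η) - vb (pt ε η) (py ε η)) := fun η hη =>
    isBoundedUnder_of_eventually_le (hεpos.mono fun ε hε => (hfacts ε hε η hη).2.2)
  have hbd4 : ∀ η > (0:ℝ), IsBoundedUnder (· ≥ ·) (𝓝[>] (0:ℝ))
      (fun ε => ub (pt ε η) (px ε η) - vb (pt ε η) (py ε η)) := fun η hη =>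
    isBoundedUnder_of_eventually_ge (hεpos.mono fun ε hε =>
      ((hfacts ε hε η hη).1).trans (hfacts ε hε η hη).2.1)
  have A1 : ∀ η > (0:ℝ), -B ≤ gPinf η := fun η hη =>
    le_liminf_of_le (hbd1 η hη).isCoboundedUnder_ge
      (hεpos.mono fun ε hε => (hfacts ε hε η hη).1)
  have A2 : ∀ η > (0:ℝ), gPinf η ≤ gDinf η := fun η hη =>
    liminf_le_liminf (hεpos.mono fun ε hε => (hfacts ε hε η hη).2.1)
      (hbd2 η hη) (hbd3 η hη).isCoboundedUnder_ge
  have A3 : ∀ η > (0:ℝ), gPinf η ≤ gPsup η := fun η hη =>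
    liminf_le_limsup (hbd1 η hη) (hbd2 η hη)
  have A4 : ∀ η > (0:ℝ), gPsup η ≤ gDsup η := fun η hη =>
    limsup_le_limsup (hεpos.mono fun ε hε => (hfacts ε hε η hη).2.1)
      (hbd2 η hη).isCoboundedUnder_le (hbd3 η hη)
  have A5 : ∀ η > (0:ℝ), gDinf η ≤ gDsup η := fun η hη =>
    liminf_le_limsup (hbd3 η hη) (hbd4 η hη)
  have A6 : ∀ η > (0:ℝ), gDsup η ≤ M := fun η hη =>
    le_of_forall_gt_imp_ge_of_dense fun c hc =>
      limsup_le_of_le (hbd4 η hη).isCoboundedUnder_le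
        (key_lemma hT hBu hBv husc hlsc hM hmax hη hc)
  have OB_gPinf_le : IsBoundedUnder (· ≤ ·) (𝓝[>] (0:ℝ)) gPinf :=
    isBoundedUnder_of_eventually_le (hηpos.mono fun η hη =>
      (A3 η hη).trans ((A4 η hη).trans (A6 η hη)))
  have OB_gPinf_ge : IsBoundedUnder (· ≥ ·) (𝓝[>] (0:ℝ)) gPinf :=
    isBoundedUnder_of_eventually_ge (hηpos.mono fun η hη => A1 η hη)
  have OB_gPsup_le : IsBoundedUnder (· ≤ ·) (𝓝[>] (0:ℝ)) gPsup :=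
    isBoundedUnder_of_eventually_le (hηpos.mono fun η hη => (A4 η hη).trans (A6 η hη))
  have OB_gPsup_ge : IsBoundedUnder (· ≥ ·) (𝓝[>] (0:ℝ)) gPsup :=
    isBoundedUnder_of_eventually_ge (hηpos.mono fun η hη => (A1 η hη).trans (A3 η hη))
  have OB_gDinf_le : IsBoundedUnder (· ≤ ·) (𝓝[>] (0:ℝ)) gDinf :=
    isBoundedUnder_of_eventually_le (hηpos.mono fun η hη => (A5 η hη).trans (A6 η hη))
  have OB_gDinf_ge : IsBoundedUnder (· ≥ ·) (𝓝[>] (0:ℝ)) gDinf :=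
    isBoundedUnder_of_eventually_ge (hηpos.mono fun η hη => (A1 η hη).trans (A2 η hη))
  have OB_gDsup_le : IsBoundedUnder (· ≤ ·) (𝓝[>] (0:ℝ)) gDsup :=
    isBoundedUnder_of_eventually_le (hηpos.mono fun η hη => A6 η hη)
  have OB_gDsup_ge : IsBoundedUnder (· ≥ ·) (𝓝[>] (0:ℝ)) gDsup :=
    isBoundedUnder_of_eventually_ge (hηpos.mono fun η hη =>
      (A1 η hη).trans ((A3 η hη).trans (A4 η hη)))
  have step1 : M ≤ Filter.liminf gPinf (𝓝[>] (0:ℝ)) := by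
    refine le_of_forall_lt_imp_le_of_dense fun r hr => ?_
    have hne : ((fun p : ℝ × En n => ub p.1 p.2 - vb p.1 p.2) ''
        (Icc 0 T ×ˢ univ)).Nonempty :=
      ⟨_, ⟨((0:ℝ),(0:En n)), ⟨h0T, mem_univ _⟩, rfl⟩⟩
    obtain ⟨z, hz, hrz⟩ := exists_lt_of_lt_csSup hne (hM ▸ hr)
    obtain ⟨⟨t1, x1⟩, hp1, rfl⟩ := hz
    have hlow : ∀ ε > (0:ℝ), ∀ η > (0:ℝ),
        ub t1 x1 - vb t1 x1 - η*(2*‖x1‖^2)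
          ≤ Psi ub vb ε η (pt ε η) (px ε η) (py ε η) := by
      intro ε hε η hη
      have h := (hmax ε hε η hη).2 t1 hp1.1 x1 x1
      simp only [Psi, sub_self, norm_zero] at h
      have hz2 : (0:ℝ)^2 / ε^2 = 0 := by simp
      rw [hz2] at h
      simp only [Psi]
      linarith
    have hinner : ∀ η > (0:ℝ), ub t1 x1 - vb t1 x1 - η*(2*‖x1‖^2) ≤ gPinf η := by
      intro η hη
      exact le_liminf_of_le (hbd1 η hη).isCoboundedUnder_ge
        (hεpos.mono fun ε hε => hlow ε hε η hη)
    have htend : Tendsto (fun η : ℝ => ub t1 x1 - vb t1 x1 - η*(2*‖x1‖^2))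
        (𝓝[>] (0:ℝ)) (𝓝 (ub t1 x1 - vb t1 x1)) := by
      have h0 : Tendsto (fun η : ℝ => η * (2*‖x1‖^2)) (𝓝 (0:ℝ))
          (𝓝 (0 * (2*‖x1‖^2))) := tendsto_id.mul_const _
      have h1 := (h0.const_sub (ub t1 x1 - vb t1 x1)).mono_left
        (nhdsWithin_le_nhds : 𝓝[>] (0:ℝ) ≤ 𝓝 0)
      simpa using h1
    have hev' : ∀ᶠ η in 𝓝[>] (0:ℝ), r ≤ gPinf η := by
      filter_upwards [htend.eventually_const_lt hrz, hηpos] with η h1 h2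
      exact h1.le.trans (hinner η h2)
    exact le_liminf_of_le OB_gPinf_le.isCoboundedUnder_ge hev'
  have L1_le_L2 : Filter.liminf gPinf (𝓝[>] (0:ℝ)) ≤ Filter.limsup gPsup (𝓝[>] (0:ℝ)) :=
    le_trans (liminf_le_liminf (hηpos.mono fun η hη => A3 η hη)
        OB_gPinf_ge OB_gPsup_le.isCoboundedUnder_ge)
      (liminf_le_limsup OB_gPsup_le OB_gPsup_ge)
  have L2_le_L4 : Filter.limsup gPsup (𝓝[>] (0:ℝ)) ≤ Filter.limsup gDsup (𝓝[>] (0:ℝ)) :=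
    limsup_le_limsup (hηpos.mono fun η hη => A4 η hη)
      OB_gPsup_ge.isCoboundedUnder_le OB_gDsup_le
  have L4_le_M : Filter.limsup gDsup (𝓝[>] (0:ℝ)) ≤ M :=
    limsup_le_of_le OB_gDsup_ge.isCoboundedUnder_le (hηpos.mono fun η hη => A6 η hη)
  have L1_le_L3 : Filter.liminf gPinf (𝓝[>] (0:ℝ)) ≤ Filter.liminf gDinf (𝓝[>] (0:ℝ)) :=
    liminf_le_liminf (hηpos.mono fun η hη => A2 η hη)
      OB_gPinf_ge OB_gDinf_le.isCoboundedUnder_ge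
  have L3_le_L4 : Filter.liminf gDinf (𝓝[>] (0:ℝ)) ≤ Filter.limsup gDsup (𝓝[>] (0:ℝ)) :=
    le_trans (liminf_le_liminf (hηpos.mono fun η hη => A5 η hη)
        OB_gDinf_ge OB_gDsup_le.isCoboundedUnder_ge)
      (liminf_le_limsup OB_gDsup_le OB_gDsup_ge)
  refine ⟨le_antisymm ((L1_le_L2.trans L2_le_L4).trans L4_le_M) step1,
    le_antisymm (L2_le_L4.trans L4_le_M) (step1.trans L1_le_L2),
    le_antisymm (L3_le_L4.trans L4_le_M) (step1.trans L1_le_L3),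
    le_antisymm L4_le_M (step1.trans (L1_le_L2.trans L2_le_L4))⟩
end
end

section
/- Doubling-of-variables limit lemma, parts (ii) and (iii): with the notation below, the iterated limits taken first in η and then in ε satisfy (ii) liminf_{ε→0} liminf_{η→0} M_{ε,η} = limsup_{ε→0} limsup_{η→0} M_{ε,η} = M' and, for any choice of maximum points (t^{ε,η}, x^{ε,η}, y^{ε,η}) of Ψ_{ε,η}, the same iterated limits of ū(t^{ε,η},x^{ε,η}) − v̄(t^{ε,η},y^{ε,η}) equal M'; and (iii) limsup_{ε→0} limsup_{η→0} |x^{ε,η} − y^{ε,η}|/ε = 0 and limsup_{ε→0} limsup_{η→0} η(|x^{ε,η}|² + |y^{ε,η}|²) = 0. -/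
open Set Filter Topology

noncomputable section

private lemma real_le_of_forall_pos' {a b : ℝ} (h : ∀ c > (0:ℝ), a ≤ b + c) : a ≤ b := by
  by_contra hc
  push_neg at hc
  have := h ((a - b) / 2) (by linarith)
  linarith

private lemma tendsto_nhdsGT_of_pos {φ : ℝ → ℝ} (h0 : Tendsto φ (𝓝[>] (0:ℝ)) (𝓝 0))
    (hp : ∀ᶠ ε in 𝓝[>] (0:ℝ), 0 < φ ε) :
    Tendsto φ (𝓝[>] (0:ℝ)) (𝓝[>] (0:ℝ)) :=
  tendsto_nhdsWithin_of_tendsto_nhds_of_eventually_within φ h0 hp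

/-- Doubling-of-variables limit lemma, parts (ii) and (iii):
iterated limits first in `η` and then in `ε`. -/
theorem doubling_limits_ii_iii
    {n : ℕ} (hn : 1 ≤ n) (T : ℝ) (hT : 0 < T)
    (ub vb : ℝ → En n → ℝ)
    (hubd : ∃ M, ∀ t ∈ Icc (0:ℝ) T, ∀ x : En n, |ub t x| ≤ M)
    (hvbd : ∃ M, ∀ t ∈ Icc (0:ℝ) T, ∀ x : En n, |vb t x| ≤ M)
    (husc : UpperSemicontinuousOn (fun p : ℝ × En n => ub p.1 p.2) (Icc 0 T ×ˢ univ))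
    (hlsc : LowerSemicontinuousOn (fun p : ℝ × En n => vb p.1 p.2) (Icc 0 T ×ˢ univ))
    (Mh : ℝ → ℝ)
    (hMh : ∀ r : ℝ, Mh r = sSup {w : ℝ | ∃ t ∈ Icc (0:ℝ) T, ∃ x y : En n,
      ‖x - y‖ ≤ r ∧ w = ub t x - vb t y})
    (M' : ℝ) (hM' : Tendsto Mh (𝓝[>] (0:ℝ)) (𝓝 M'))
    (pt : ℝ → ℝ → ℝ) (px py : ℝ → ℝ → En n)
    (hmax : ∀ ε > (0:ℝ), ∀ η > (0:ℝ),
      pt ε η ∈ Icc (0:ℝ) T ∧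
      ∀ t ∈ Icc (0:ℝ) T, ∀ x y : En n,
        Psi ub vb ε η t x y ≤ Psi ub vb ε η (pt ε η) (px ε η) (py ε η))
 :
    (Filter.liminf (fun ε => Filter.liminf
        (fun η => Psi ub vb ε η (pt ε η) (px ε η) (py ε η)) (𝓝[>] (0:ℝ)))
        (𝓝[>] (0:ℝ)) = M')
    ∧ (Filter.limsup (fun ε => Filter.limsup
        (fun η => Psi ub vb ε η (pt ε η) (px ε η) (py ε η)) (𝓝[>] (0:ℝ)))
        (𝓝[>] (0:ℝ)) = M')
    ∧ (Filter.liminf (fun ε => Filter.liminf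
        (fun η => ub (pt ε η) (px ε η) - vb (pt ε η) (py ε η)) (𝓝[>] (0:ℝ)))
        (𝓝[>] (0:ℝ)) = M')
    ∧ (Filter.limsup (fun ε => Filter.limsup
        (fun η => ub (pt ε η) (px ε η) - vb (pt ε η) (py ε η)) (𝓝[>] (0:ℝ)))
        (𝓝[>] (0:ℝ)) = M')
    ∧ (Filter.limsup (fun ε => Filter.limsup
        (fun η => ‖px ε η - py ε η‖ / ε) (𝓝[>] (0:ℝ)))
        (𝓝[>] (0:ℝ)) = 0)
    ∧ (Filter.limsup (fun ε => Filter.limsup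
        (fun η => η * (‖px ε η‖ ^ 2 + ‖py ε η‖ ^ 2)) (𝓝[>] (0:ℝ)))
        (𝓝[>] (0:ℝ)) = 0) := by
  classical
  obtain ⟨Mu, hMu⟩ := hubd
  obtain ⟨Mv, hMv⟩ := hvbd
  have h0T : (0:ℝ) ∈ Icc (0:ℝ) T := ⟨le_rfl, hT.le⟩
  have hposl : ∀ᶠ η in 𝓝[>] (0:ℝ), 0 < η := eventually_mem_nhdsWithin
  have hGbd : ∀ t ∈ Icc (0:ℝ) T, ∀ x y : En n,
      -(Mu + Mv) ≤ ub t x - vb t y ∧ ub t x - vb t y ≤ Mu + Mv := by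
    intro t ht x y
    obtain ⟨h1, h2⟩ := abs_le.mp (hMu t ht x)
    obtain ⟨h3, h4⟩ := abs_le.mp (hMv t ht y)
    constructor <;> linarith
  have hMh_ub : ∀ r : ℝ, ∀ t ∈ Icc (0:ℝ) T, ∀ x y : En n,
      ‖x - y‖ ≤ r → ub t x - vb t y ≤ Mh r := by
    intro r t ht x y hxy
    rw [hMh r]
    refine le_csSup ⟨Mu + Mv, ?_⟩ ⟨t, ht, x, y, hxy, rfl⟩
    rintro w ⟨t', ht', x', y', -, rfl⟩
    exact (hGbd t' ht' x' y').2
  have hMh_lt : ∀ r ≥ (0:ℝ), ∀ δ > (0:ℝ), ∃ t ∈ Icc (0:ℝ) T, ∃ x y : En n,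
      ‖x - y‖ ≤ r ∧ Mh r - δ < ub t x - vb t y := by
    intro r hr δ hδ
    have hne : {w : ℝ | ∃ t ∈ Icc (0:ℝ) T, ∃ x y : En n,
        ‖x - y‖ ≤ r ∧ w = ub t x - vb t y}.Nonempty :=
      ⟨ub 0 0 - vb 0 0, 0, h0T, 0, 0, by simpa using hr, rfl⟩
    have hlt : Mh r - δ < sSup {w : ℝ | ∃ t ∈ Icc (0:ℝ) T, ∃ x y : En n,
        ‖x - y‖ ≤ r ∧ w = ub t x - vb t y} := by
      rw [← hMh r]; linarith
    obtain ⟨w, hw, hlt'⟩ := exists_lt_of_lt_csSup hne hlt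
    obtain ⟨t, ht, x, y, hxy, rfl⟩ := hw
    exact ⟨t, ht, x, y, hxy, hlt'⟩
  -- per maximum-point facts
  have hF_ge : ∀ ε > (0:ℝ), ∀ η > (0:ℝ),
      ub 0 0 - vb 0 0 ≤ Psi ub vb ε η (pt ε η) (px ε η) (py ε η) := by
    intro ε hε η hη
    have h := (hmax ε hε η hη).2 0 h0T 0 0
    simpa [Psi] using h
  have hFG : ∀ ε η : ℝ, Psi ub vb ε η (pt ε η) (px ε η) (py ε η)
      = (ub (pt ε η) (px ε η) - vb (pt ε η) (py ε η))
        - (‖px ε η - py ε η‖ ^ 2 / ε ^ 2 + η * (‖px ε η‖ ^ 2 + ‖py ε η‖ ^ 2)) := by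
    intro ε η; simp only [Psi]; ring
  have hGK : ∀ ε > (0:ℝ), ∀ η > (0:ℝ),
      ub (pt ε η) (px ε η) - vb (pt ε η) (py ε η) ≤ Mu + Mv := fun ε hε η hη =>
    (hGbd _ (hmax ε hε η hη).1 _ _).2
  have hpen_le : ∀ ε > (0:ℝ), ∀ η > (0:ℝ),
      ‖px ε η - py ε η‖ ^ 2 / ε ^ 2 + η * (‖px ε η‖ ^ 2 + ‖py ε η‖ ^ 2)
        ≤ (Mu + Mv) - (ub 0 0 - vb 0 0) := by
    intro ε hε η hη
    have h1 := hF_ge ε hε η hη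
    have h2 := hGK ε hε η hη
    rw [hFG ε η] at h1
    linarith
  set κ : ℝ := Real.sqrt ((Mu + Mv) - (ub 0 0 - vb 0 0)) + 1 with hκdef
  have hκ : 0 < κ := by positivity
  have hxyκ : ∀ ε > (0:ℝ), ∀ η > (0:ℝ), ‖px ε η - py ε η‖ ≤ ε * κ := by
    intro ε hε η hη
    have h1 : ‖px ε η - py ε η‖ ^ 2 / ε ^ 2 ≤ (Mu + Mv) - (ub 0 0 - vb 0 0) := by
      have h0 := hpen_le ε hε η hη
      have h3 : 0 ≤ η * (‖px ε η‖ ^ 2 + ‖py ε η‖ ^ 2) := by positivity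
      linarith
    have h2 : ‖px ε η - py ε η‖ ^ 2 ≤ ε ^ 2 * ((Mu + Mv) - (ub 0 0 - vb 0 0)) := by
      rw [div_le_iff₀ (by positivity : (0:ℝ) < ε ^ 2)] at h1
      linarith
    have h4 : ‖px ε η - py ε η‖
        ≤ ε * Real.sqrt ((Mu + Mv) - (ub 0 0 - vb 0 0)) := by
      have h5 := Real.sqrt_le_sqrt h2
      rwa [Real.sqrt_sq (norm_nonneg _), Real.sqrt_mul (sq_nonneg ε),
        Real.sqrt_sq hε.le] at h5
    have h6 : ε * Real.sqrt ((Mu + Mv) - (ub 0 0 - vb 0 0)) ≤ ε * κ :=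
      mul_le_mul_of_nonneg_left (by rw [hκdef]; linarith) hε.le
    linarith
  have hG_le_Mh : ∀ ε > (0:ℝ), ∀ η > (0:ℝ),
      ub (pt ε η) (px ε η) - vb (pt ε η) (py ε η) ≤ Mh (ε * κ) := fun ε hε η hη =>
    hMh_ub (ε * κ) _ (hmax ε hε η hη).1 _ _ (hxyκ ε hε η hη)
  -- lower bound with nearly optimal witnesses
  have hlow : ∀ ε > (0:ℝ), ∀ δ > (0:ℝ), ∃ R : ℝ, 0 ≤ R ∧ ∀ η > (0:ℝ),
      Mh (ε ^ 2) - δ - ε ^ 2 - η * R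
        ≤ Psi ub vb ε η (pt ε η) (px ε η) (py ε η) := by
    intro ε hε δ hδ
    obtain ⟨t, ht, x, y, hxy, hlt⟩ := hMh_lt (ε ^ 2) (sq_nonneg ε) δ hδ
    refine ⟨‖x‖ ^ 2 + ‖y‖ ^ 2, by positivity, ?_⟩
    intro η hη
    have h1 := (hmax ε hε η hη).2 t ht x y
    have h2 : ‖x - y‖ ^ 2 / ε ^ 2 ≤ ε ^ 2 := by
      rw [div_le_iff₀ (by positivity : (0:ℝ) < ε ^ 2)]
      nlinarith [norm_nonneg (x - y)]
    simp only [Psi] at h1 ⊢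
    linarith
  -- eventual bounds in η
  have hFev_ub : ∀ ε > (0:ℝ), ∀ᶠ η in 𝓝[>] (0:ℝ),
      Psi ub vb ε η (pt ε η) (px ε η) (py ε η) ≤ Mh (ε * κ) := by
    intro ε hε
    filter_upwards [hposl] with η hη
    have h1 := hG_le_Mh ε hε η hη
    have h2 : 0 ≤ ‖px ε η - py ε η‖ ^ 2 / ε ^ 2 + η * (‖px ε η‖ ^ 2 + ‖py ε η‖ ^ 2) := by
      positivity
    rw [hFG ε η]; linarith
  have hFev_lb : ∀ ε > (0:ℝ), ∀ c > (0:ℝ), ∀ᶠ η in 𝓝[>] (0:ℝ),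
      Mh (ε ^ 2) - ε ^ 2 - c ≤ Psi ub vb ε η (pt ε η) (px ε η) (py ε η) := by
    intro ε hε c hc
    obtain ⟨R, hR0, hR⟩ := hlow ε hε (c / 2) (by linarith)
    have hsm : ∀ᶠ η in 𝓝[>] (0:ℝ), η < c / (2 * (R + 1)) :=
      Eventually.filter_mono nhdsWithin_le_nhds (gt_mem_nhds (by positivity))
    filter_upwards [hposl, hsm] with η hη hη2
    have h1 := hR η hη
    have h3 : η * (R + 1) ≤ c / (2 * (R + 1)) * (R + 1) :=
      mul_le_mul_of_nonneg_right hη2.le (by linarith)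
    have h4 : c / (2 * (R + 1)) * (R + 1) = c / 2 := by
      field_simp
    have h2 : η * R ≤ c / 2 := by nlinarith [hη.le]
    linarith
  -- outer tendsto facts
  have hsq0 : Tendsto (fun ε : ℝ => ε ^ 2) (𝓝[>] (0:ℝ)) (𝓝 0) := by
    have := ((continuous_pow 2).tendsto (0:ℝ)).mono_left
      (nhdsWithin_le_nhds (s := Ioi (0:ℝ)))
    simpa using this
  have htsq : Tendsto (fun ε : ℝ => ε ^ 2) (𝓝[>] (0:ℝ)) (𝓝[>] (0:ℝ)) :=
    tendsto_nhdsGT_of_pos hsq0 (hposl.mono fun ε hε => pow_pos hε 2)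
  have htmul : Tendsto (fun ε : ℝ => ε * κ) (𝓝[>] (0:ℝ)) (𝓝[>] (0:ℝ)) := by
    apply tendsto_nhdsGT_of_pos
    · have := ((continuous_mul_right κ).tendsto (0:ℝ)).mono_left
        (nhdsWithin_le_nhds (s := Ioi (0:ℝ)))
      simpa using this
    · exact hposl.mono fun ε hε => mul_pos hε hκ
  have hU : Tendsto (fun ε : ℝ => Mh (ε * κ)) (𝓝[>] (0:ℝ)) (𝓝 M') := hM'.comp htmul
  have hL : Tendsto (fun ε : ℝ => Mh (ε ^ 2) - ε ^ 2) (𝓝[>] (0:ℝ)) (𝓝 M') := by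
    have := (hM'.comp htsq).sub hsq0
    simpa using this
  have hD : Tendsto (fun ε : ℝ => Mh (ε * κ) - (Mh (ε ^ 2) - ε ^ 2)) (𝓝[>] (0:ℝ)) (𝓝 0) := by
    have := hU.sub hL
    simpa using this
  have hsqrtD : Tendsto (fun ε : ℝ => Real.sqrt (Mh (ε * κ) - (Mh (ε ^ 2) - ε ^ 2)))
      (𝓝[>] (0:ℝ)) (𝓝 0) := by
    have := (Real.continuous_sqrt.tendsto 0).comp hD
    simpa [Function.comp_def] using this
  -- generic inner-limit package
  have main : ∀ W : ℝ → ℝ → ℝ,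
      (∀ ε > (0:ℝ), ∀ c > (0:ℝ), ∀ᶠ η in 𝓝[>] (0:ℝ), Mh (ε ^ 2) - ε ^ 2 - c ≤ W ε η) →
      (∀ ε > (0:ℝ), ∀ᶠ η in 𝓝[>] (0:ℝ), W ε η ≤ Mh (ε * κ)) →
      Tendsto (fun ε => Filter.liminf (fun η => W ε η) (𝓝[>] (0:ℝ))) (𝓝[>] (0:ℝ)) (𝓝 M')
      ∧ Tendsto (fun ε => Filter.limsup (fun η => W ε η) (𝓝[>] (0:ℝ))) (𝓝[>] (0:ℝ)) (𝓝 M') := by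
    intro W hlb hub
    have hliminf_lb : ∀ ε > (0:ℝ), Mh (ε ^ 2) - ε ^ 2
        ≤ Filter.liminf (fun η => W ε η) (𝓝[>] (0:ℝ)) := by
      intro ε hε
      apply real_le_of_forall_pos'
      intro c hc
      have h := le_liminf_of_le (isCoboundedUnder_ge_of_eventually_le _ (hub ε hε))
        (hlb ε hε c hc)
      linarith
    have hlimsup_ub : ∀ ε > (0:ℝ),
        Filter.limsup (fun η => W ε η) (𝓝[>] (0:ℝ)) ≤ Mh (ε * κ) := by
      intro ε hε
      exact limsup_le_of_le (isCoboundedUnder_le_of_eventually_le _ (hlb ε hε 1 one_pos))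
        (hub ε hε)
    have hmono : ∀ ε > (0:ℝ), Filter.liminf (fun η => W ε η) (𝓝[>] (0:ℝ))
        ≤ Filter.limsup (fun η => W ε η) (𝓝[>] (0:ℝ)) := by
      intro ε hε
      exact liminf_le_limsup ⟨Mh (ε * κ), eventually_map.mpr (hub ε hε)⟩
        ⟨Mh (ε ^ 2) - ε ^ 2 - 1, eventually_map.mpr (hlb ε hε 1 one_pos)⟩
    constructor
    · exact tendsto_of_tendsto_of_tendsto_of_le_of_le' hL hU
        (hposl.mono fun ε hε => hliminf_lb ε hε)
        (hposl.mono fun ε hε => (hmono ε hε).trans (hlimsup_ub ε hε))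
    · exact tendsto_of_tendsto_of_tendsto_of_le_of_le' hL hU
        (hposl.mono fun ε hε => (hliminf_lb ε hε).trans (hmono ε hε))
        (hposl.mono fun ε hε => hlimsup_ub ε hε)
  have hGev_lb : ∀ ε > (0:ℝ), ∀ c > (0:ℝ), ∀ᶠ η in 𝓝[>] (0:ℝ),
      Mh (ε ^ 2) - ε ^ 2 - c ≤ ub (pt ε η) (px ε η) - vb (pt ε η) (py ε η) := by
    intro ε hε c hc
    filter_upwards [hposl, hFev_lb ε hε c hc] with η hη h1
    have h2 : 0 ≤ ‖px ε η - py ε η‖ ^ 2 / ε ^ 2 + η * (‖px ε η‖ ^ 2 + ‖py ε η‖ ^ 2) := by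
      positivity
    rw [hFG ε η] at h1
    linarith
  have hGev_ub : ∀ ε > (0:ℝ), ∀ᶠ η in 𝓝[>] (0:ℝ),
      ub (pt ε η) (px ε η) - vb (pt ε η) (py ε η) ≤ Mh (ε * κ) := fun ε hε =>
    hposl.mono fun η hη => hG_le_Mh ε hε η hη
  obtain ⟨hF1, hF2⟩ := main (fun ε η => Psi ub vb ε η (pt ε η) (px ε η) (py ε η))
    hFev_lb hFev_ub
  obtain ⟨hG1, hG2⟩ := main (fun ε η => ub (pt ε η) (px ε η) - vb (pt ε η) (py ε η))
    hGev_lb hGev_ub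
  -- penalization eventual bound
  have hPen_ub : ∀ ε > (0:ℝ), ∀ c > (0:ℝ), ∀ᶠ η in 𝓝[>] (0:ℝ),
      ‖px ε η - py ε η‖ ^ 2 / ε ^ 2 + η * (‖px ε η‖ ^ 2 + ‖py ε η‖ ^ 2)
        ≤ Mh (ε * κ) - (Mh (ε ^ 2) - ε ^ 2) + c := by
    intro ε hε c hc
    filter_upwards [hposl, hFev_lb ε hε c hc] with η hη h1
    have h2 := hG_le_Mh ε hε η hη
    rw [hFG ε η] at h1
    linarith
  -- the η(|x|²+|y|²) term
  have hBlimsup_ub : ∀ ε > (0:ℝ),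
      Filter.limsup (fun η => η * (‖px ε η‖ ^ 2 + ‖py ε η‖ ^ 2)) (𝓝[>] (0:ℝ))
        ≤ Mh (ε * κ) - (Mh (ε ^ 2) - ε ^ 2) := by
    intro ε hε
    apply real_le_of_forall_pos'
    intro c hc
    apply limsup_le_of_le (isCoboundedUnder_le_of_eventually_le _
      (hposl.mono fun η hη => mul_nonneg hη.le (by positivity)))
    filter_upwards [hposl, hPen_ub ε hε c hc] with η hη h1
    have h2 : 0 ≤ ‖px ε η - py ε η‖ ^ 2 / ε ^ 2 := by positivity
    linarith
  have hBliminf_lb : ∀ ε > (0:ℝ), (0:ℝ)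
      ≤ Filter.liminf (fun η => η * (‖px ε η‖ ^ 2 + ‖py ε η‖ ^ 2)) (𝓝[>] (0:ℝ)) := by
    intro ε hε
    refine le_liminf_of_le (isCoboundedUnder_ge_of_eventually_le
      (x := (Mu + Mv) - (ub 0 0 - vb 0 0)) _
      (hposl.mono fun η hη => ?_)) (hposl.mono fun η hη => mul_nonneg hη.le (by positivity))
    exact le_trans (le_add_of_nonneg_left (by positivity)) (hpen_le ε hε η hη)
  have hBmono : ∀ ε > (0:ℝ),
      Filter.liminf (fun η => η * (‖px ε η‖ ^ 2 + ‖py ε η‖ ^ 2)) (𝓝[>] (0:ℝ))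
        ≤ Filter.limsup (fun η => η * (‖px ε η‖ ^ 2 + ‖py ε η‖ ^ 2)) (𝓝[>] (0:ℝ)) := by
    intro ε hε
    refine liminf_le_limsup ⟨(Mu + Mv) - (ub 0 0 - vb 0 0),
      eventually_map.mpr (hposl.mono fun η hη => ?_)⟩
      ⟨0, eventually_map.mpr (hposl.mono fun η hη => mul_nonneg hη.le (by positivity))⟩
    exact le_trans (le_add_of_nonneg_left (by positivity)) (hpen_le ε hε η hη)
  have hBt : Tendsto (fun ε => Filter.limsup
      (fun η => η * (‖px ε η‖ ^ 2 + ‖py ε η‖ ^ 2)) (𝓝[>] (0:ℝ))) (𝓝[>] (0:ℝ)) (𝓝 0) := by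
    apply tendsto_of_tendsto_of_tendsto_of_le_of_le' tendsto_const_nhds hD
      (hposl.mono fun ε hε => (hBliminf_lb ε hε).trans (hBmono ε hε))
      (hposl.mono fun ε hε => hBlimsup_ub ε hε)
  -- the |x-y|/ε term
  have hAlimsup_ub : ∀ ε > (0:ℝ),
      Filter.limsup (fun η => ‖px ε η - py ε η‖ / ε) (𝓝[>] (0:ℝ))
        ≤ Real.sqrt (Mh (ε * κ) - (Mh (ε ^ 2) - ε ^ 2)) := by
    intro ε hε
    have ht : Tendsto (fun c : ℝ => Real.sqrt (Mh (ε * κ) - (Mh (ε ^ 2) - ε ^ 2) + c))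
        (𝓝[>] (0:ℝ)) (𝓝 (Real.sqrt (Mh (ε * κ) - (Mh (ε ^ 2) - ε ^ 2)))) := by
      have h1 : Tendsto (fun c : ℝ => Mh (ε * κ) - (Mh (ε ^ 2) - ε ^ 2) + c) (𝓝 (0:ℝ))
          (𝓝 (Mh (ε * κ) - (Mh (ε ^ 2) - ε ^ 2) + 0)) :=
        (continuous_const.add continuous_id).tendsto 0
      have h2 := (Real.continuous_sqrt.tendsto _).comp
        (h1.mono_left (nhdsWithin_le_nhds (s := Ioi (0:ℝ))))
      simpa [Function.comp_def] using h2
    apply ge_of_tendsto ht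
    filter_upwards [hposl] with c hc
    apply limsup_le_of_le (isCoboundedUnder_le_of_eventually_le _
      (hposl.mono fun η hη => div_nonneg (norm_nonneg _) hε.le))
    filter_upwards [hposl, hPen_ub ε hε c hc] with η hη h1
    have h2 : 0 ≤ η * (‖px ε η‖ ^ 2 + ‖py ε η‖ ^ 2) := mul_nonneg hη.le (by positivity)
    have h3 : ‖px ε η - py ε η‖ / ε = Real.sqrt (‖px ε η - py ε η‖ ^ 2 / ε ^ 2) := by
      rw [← div_pow, Real.sqrt_sq (div_nonneg (norm_nonneg _) hε.le)]
    rw [h3]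
    exact Real.sqrt_le_sqrt (by linarith)
  have hAliminf_lb : ∀ ε > (0:ℝ), (0:ℝ)
      ≤ Filter.liminf (fun η => ‖px ε η - py ε η‖ / ε) (𝓝[>] (0:ℝ)) := by
    intro ε hε
    refine le_liminf_of_le (isCoboundedUnder_ge_of_eventually_le (x := κ) _ (hposl.mono fun η hη => ?_))
      (hposl.mono fun η hη => div_nonneg (norm_nonneg _) hε.le)
    show ‖px ε η - py ε η‖ / ε ≤ κ
    rw [div_le_iff₀ hε, mul_comm]
    exact hxyκ ε hε η hη
  have hAmono : ∀ ε > (0:ℝ),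
      Filter.liminf (fun η => ‖px ε η - py ε η‖ / ε) (𝓝[>] (0:ℝ))
        ≤ Filter.limsup (fun η => ‖px ε η - py ε η‖ / ε) (𝓝[>] (0:ℝ)) := by
    intro ε hε
    refine liminf_le_limsup ⟨κ, eventually_map.mpr (hposl.mono fun η hη => ?_)⟩
      ⟨0, eventually_map.mpr (hposl.mono fun η hη => div_nonneg (norm_nonneg _) hε.le)⟩
    show ‖px ε η - py ε η‖ / ε ≤ κ
    rw [div_le_iff₀ hε, mul_comm]
    exact hxyκ ε hε η hη
  have hAt : Tendsto (fun ε => Filter.limsup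
      (fun η => ‖px ε η - py ε η‖ / ε) (𝓝[>] (0:ℝ))) (𝓝[>] (0:ℝ)) (𝓝 0) := by
    apply tendsto_of_tendsto_of_tendsto_of_le_of_le' tendsto_const_nhds hsqrtD
      (hposl.mono fun ε hε => (hAliminf_lb ε hε).trans (hAmono ε hε))
      (hposl.mono fun ε hε => hAlimsup_ub ε hε)
  exact ⟨hF1.liminf_eq, hF2.limsup_eq, hG1.liminf_eq, hG2.limsup_eq,
    hAt.limsup_eq, hBt.limsup_eq⟩
end
end

section
/- Matrix inequality from the Ishii block estimate: let n, d ≥ 1, ε, η > 0, and let X, Y be symmetric n×n real matrices such that ⟨Xξ, ξ⟩ − ⟨Yζ, ζ⟩ ≤ (2/ε²)|ξ − ζ|² + 2η(|ξ|² + |ζ|²) for all ξ, ζ ∈ ℝⁿ (i.e. the block matrix diag(X, −Y) is dominated by (2/ε²)[[I,−I],[−I,I]] + 2η·I_{2n} in the sense of quadratic forms). Then for all real n×d matrices A and B: ½Tr(AAᵀX) ≤ ½Tr(BBᵀY) + (1/ε²)‖A − B‖² + η(‖A‖² + ‖B‖²), where ‖·‖ denotes the Frobenius norm. -/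
open Set Filter Topology

noncomputable section

theorem trace_col (n d : ℕ) (A : Matrix (Fin n) (Fin d) ℝ) (M : Matrix (Fin n) (Fin n) ℝ) :
    Matrix.trace (A * A.transpose * M)
      = ∑ j : Fin d, (inner ℝ (Matrix.toEuclideanLin M
          ((WithLp.equiv 2 (Fin n → ℝ)).symm (fun i => A i j)))
          ((WithLp.equiv 2 (Fin n → ℝ)).symm (fun i => A i j)) : ℝ) := by
  simp only [Matrix.trace, Matrix.mul_apply, Matrix.diag, PiLp.inner_apply,
    RCLike.inner_apply, conj_trivial, WithLp.equiv_symm_apply, Matrix.toEuclideanLin_apply_piLp_toLp,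
    PiLp.toLp_apply, Matrix.mulVec, dotProduct, Finset.sum_mul,
    Finset.mul_sum, Matrix.transpose_apply]
  calc (∑ x : Fin n, ∑ y : Fin n, ∑ j : Fin d, A x j * A y j * M y x)
      = ∑ x : Fin n, ∑ j : Fin d, ∑ y : Fin n, A x j * A y j * M y x := by
        exact Finset.sum_congr rfl fun x _ => Finset.sum_comm
    _ = ∑ j : Fin d, ∑ x : Fin n, ∑ y : Fin n, A x j * A y j * M y x := Finset.sum_comm
    _ = ∑ j : Fin d, ∑ y : Fin n, ∑ x : Fin n, M y x * A x j * A y j := by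
        refine Finset.sum_congr rfl fun j _ => (Finset.sum_comm.trans ?_)
        exact Finset.sum_congr rfl fun y _ => Finset.sum_congr rfl fun x _ => by ring
      _ = ∑ j : Fin d, ∑ x : Fin n, ∑ i : Fin n, A x j * (M x i * A i j) := by
          exact Finset.sum_congr rfl fun j _ => Finset.sum_congr rfl fun y _ =>
            Finset.sum_congr rfl fun x _ => by ring

theorem norm_col (n d : ℕ) (A : Matrix (Fin n) (Fin d) ℝ) :
    ∑ j : Fin d, ‖((WithLp.equiv 2 (Fin n → ℝ)).symm (fun i => A i j))‖ ^ 2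
      = ∑ i, ∑ j, (A i j) ^ 2 := by
  rw [Finset.sum_comm]
  refine Finset.sum_congr rfl fun j _ => ?_
  rw [EuclideanSpace.norm_eq, Real.sq_sqrt (by positivity)]
  simp [sq_abs]

theorem frob_sq {n d : ℕ} (M : Matrix (Fin n) (Fin d) ℝ) :
    (frobNorm M) ^ 2 = ∑ i, ∑ j, (M i j) ^ 2 := by
  rw [frobNorm, Real.sq_sqrt (by positivity)]


/-- Matrix inequality from the Ishii block estimate. -/
theorem ishii_block_trace_inequality
    {n d : ℕ} (hn : 1 ≤ n) (hd : 1 ≤ d)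
    (ε η : ℝ) (hε : 0 < ε) (hη : 0 < η)
    (X Y : Matrix (Fin n) (Fin n) ℝ) (hX : X.IsSymm) (hY : Y.IsSymm)
    (hblock : ∀ ξ ζ : En n,
      (inner ℝ (Matrix.toEuclideanLin X ξ) ξ : ℝ)
        - (inner ℝ (Matrix.toEuclideanLin Y ζ) ζ : ℝ)
        ≤ (2 / ε ^ 2) * ‖ξ - ζ‖ ^ 2 + 2 * η * (‖ξ‖ ^ 2 + ‖ζ‖ ^ 2)) :
    ∀ (Am Bm : Matrix (Fin n) (Fin d) ℝ),
      (1 / 2) * Matrix.trace (Am * Am.transpose * X)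
        ≤ (1 / 2) * Matrix.trace (Bm * Bm.transpose * Y)
          + (1 / ε ^ 2) * (frobNorm (Am - Bm)) ^ 2
          + η * ((frobNorm Am) ^ 2 + (frobNorm Bm) ^ 2) := by
  intro Am Bm
  have hdiff : ∀ j : Fin d,
      (WithLp.equiv 2 (Fin n → ℝ)).symm (fun i => Am i j)
        - (WithLp.equiv 2 (Fin n → ℝ)).symm (fun i => Bm i j)
      = (WithLp.equiv 2 (Fin n → ℝ)).symm (fun i => (Am - Bm) i j) := by
    intro j; ext i; simp [Matrix.sub_apply]
  have hsum := Finset.sum_le_sum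
    (fun j (_ : j ∈ (Finset.univ : Finset (Fin d))) => hblock
      ((WithLp.equiv 2 (Fin n → ℝ)).symm (fun i => Am i j))
      ((WithLp.equiv 2 (Fin n → ℝ)).symm (fun i => Bm i j)))
  rw [Finset.sum_sub_distrib] at hsum
  have hrhs : ∑ j : Fin d, ((2 / ε ^ 2)
        * ‖(WithLp.equiv 2 (Fin n → ℝ)).symm (fun i => Am i j)
            - (WithLp.equiv 2 (Fin n → ℝ)).symm (fun i => Bm i j)‖ ^ 2
      + 2 * η * (‖(WithLp.equiv 2 (Fin n → ℝ)).symm (fun i => Am i j)‖ ^ 2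
        + ‖(WithLp.equiv 2 (Fin n → ℝ)).symm (fun i => Bm i j)‖ ^ 2))
      = (2 / ε ^ 2) * (frobNorm (Am - Bm)) ^ 2
        + 2 * η * ((frobNorm Am) ^ 2 + (frobNorm Bm) ^ 2) := by
    rw [Finset.sum_add_distrib, ← Finset.mul_sum, ← Finset.mul_sum,
      Finset.sum_add_distrib, frob_sq, frob_sq, frob_sq]
    congr 1
    · congr 1
      simp only [hdiff]
      exact norm_col n d (Am - Bm)
    · congr 1
      rw [← norm_col n d Am, ← norm_col n d Bm]
  rw [hrhs] at hsum
  rw [trace_col n d Am X, trace_col n d Bm Y]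
  ring_nf at hsum ⊢
  linarith
end
end

section
/- Stability of viscosity subsolutions under monotone decreasing limits: assume (H1). Let (f^p)_{p∈ℕ} and f̃ be continuous generators [0,T]×ℝⁿ×ℝ×ℝ^d×A×B → ℝ with f^{p+1} ≤ f^p pointwise and f^p → f̃ uniformly on compact subsets. Let ℓ, ℓ' : [0,T]×ℝⁿ → ℝ be continuous bounded obstacles with ℓ < ℓ' and G : ℝⁿ → ℝ continuous bounded with ℓ(T,·) ≤ G ≤ ℓ'(T,·). For each p, let w^p be a continuous viscosity solution of the obstacle Isaacs equation E(f^p, ℓ, ℓ', G) satisfying ℓ ≤ w^p ≤ ℓ', and assume w^{p+1} ≤ w^p pointwise. Define w⁰(t,x) := lim_{p→∞} w^p(t,x). Then w⁰ is a viscosity subsolution of E(f̃, ℓ, ℓ', G). -/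
open Set Filter Topology

noncomputable section

namespace StabAux

/-- sup-inf of pointwise-close families are close. -/
lemma ciSup_ciInf_abs_le {A B : Type} [Nonempty A] [Nonempty B]
    (g h : A → B → ℝ) {ε Cb : ℝ} (hε : 0 ≤ ε)
    (hb : ∀ α β, |h α β| ≤ Cb)
    (hgh : ∀ α β, |g α β - h α β| ≤ ε) :
    |(⨆ α, ⨅ β, g α β) - (⨆ α, ⨅ β, h α β)| ≤ ε := by
  have hgb : ∀ α β, |g α β| ≤ Cb + ε := by
    intro α β
    have := abs_sub_abs_le_abs_sub (g α β) (h α β)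
    have h2 := hgh α β
    have h3 := hb α β
    linarith [abs_le.1 (hgh α β), abs_le.1 (hb α β), abs_nonneg (g α β - h α β)]
  have bddg : ∀ α, BddBelow (range (g α)) := by
    intro α
    exact ⟨-(Cb + ε), by rintro y ⟨β, rfl⟩; linarith [(abs_le.1 (hgb α β)).1]⟩
  have bddh : ∀ α, BddBelow (range (h α)) := by
    intro α
    exact ⟨-Cb, by rintro y ⟨β, rfl⟩; linarith [(abs_le.1 (hb α β)).1]⟩
  have bAg : BddAbove (range fun α => ⨅ β, g α β) := by
    refine ⟨Cb + ε, ?_⟩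
    rintro y ⟨α, rfl⟩
    exact le_trans (ciInf_le (bddg α) (Classical.arbitrary B))
      (abs_le.1 (hgb α _)).2
  have bAh : BddAbove (range fun α => ⨅ β, h α β) := by
    refine ⟨Cb, ?_⟩
    rintro y ⟨α, rfl⟩
    exact le_trans (ciInf_le (bddh α) (Classical.arbitrary B))
      (abs_le.1 (hb α _)).2
  have key : ∀ (u v : A → B → ℝ), (∀ α, BddBelow (range (u α))) →
      BddAbove (range fun α => ⨅ β, v α β) →
      (∀ α β, u α β ≤ v α β + ε) →
      (⨆ α, ⨅ β, u α β) ≤ (⨆ α, ⨅ β, v α β) + ε := by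
    intro u v bdu bAv huv
    refine ciSup_le fun α => ?_
    have h1 : (⨅ β, u α β) ≤ (⨅ β, v α β) + ε := by
      have : ∀ β, (⨅ β', u α β') - ε ≤ v α β := by
        intro β
        have := ciInf_le (bdu α) β
        linarith [huv α β]
      linarith [le_ciInf this]
    exact h1.trans (by linarith [le_ciSup bAv α])
  have h1 := key g h bddg bAh (fun α β => by linarith [abs_le.1 (hgh α β)])
  have h2 := key h g bddh bAg (fun α β => by linarith [abs_le.1 (hgh α β)])
  rw [abs_le]; constructor <;> linarith

/-- Along a convergent sequence inside a compact set, a continuous function is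
uniformly close, uniformly over a compact fiber. -/
lemma eventually_uniform_close {Z C : Type} [MetricSpace Z] [MetricSpace C] [CompactSpace C]
    {S : Set Z} (hS : IsCompact S) {Φ : Z → C → ℝ}
    (hΦ : ContinuousOn (fun p : Z × C => Φ p.1 p.2) (S ×ˢ univ))
    {zk : ℕ → Z} {z : Z} (hzS : ∀ k, zk k ∈ S) (hz : z ∈ S)
    (hlim : Tendsto zk atTop (𝓝 z)) {ε : ℝ} (hε : 0 < ε) :
    ∀ᶠ k in atTop, ∀ c : C, |Φ (zk k) c - Φ z c| ≤ ε := by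
  have hUC := (hS.prod isCompact_univ).uniformContinuousOn_of_continuous hΦ
  rw [Metric.uniformContinuousOn_iff] at hUC
  obtain ⟨δ, hδ, hd⟩ := hUC ε hε
  filter_upwards [hlim (Metric.ball_mem_nhds z hδ)] with k hk
  intro c
  have hdist : dist ((zk k, c) : Z × C) (z, c) < δ := by
    have heq : dist ((zk k, c) : Z × C) (z, c) = dist (zk k) z := by
      rw [Prod.dist_eq]; simp [dist_self, max_eq_left dist_nonneg]
    rw [heq]; exact hk
  have := hd (zk k, c) ⟨hzS k, mem_univ c⟩ (z, c) ⟨hz, mem_univ c⟩ hdist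
  rw [Real.dist_eq] at this
  exact this.le

/-- clamp to `[0,T]`. -/
def cl (T t : ℝ) : ℝ := max 0 (min t T)

lemma cl_continuous (T : ℝ) : Continuous (cl T) :=
  continuous_const.max (continuous_id.min continuous_const)

lemma cl_mem (T : ℝ) (hT : 0 ≤ T) (t : ℝ) : cl T t ∈ Icc 0 T :=
  ⟨le_max_left _ _, max_le hT (min_le_right _ _)⟩

lemma cl_eq {T t : ℝ} (ht : t ∈ Icc 0 T) : cl T t = t := by
  have := ht.1; have := ht.2
  unfold cl
  rw [min_eq_left ht.2, max_eq_right ht.1]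

lemma cont_clamp {β γ : Type} [TopologicalSpace β] [TopologicalSpace γ] {T : ℝ} (hT : 0 ≤ T)
    {F : ℝ × β → γ} (hF : ContinuousOn F (Icc 0 T ×ˢ (univ : Set β))) :
    Continuous fun p : ℝ × β => F (cl T p.1, p.2) := by
  rw [← continuousOn_univ]
  refine hF.comp (((cl_continuous T).comp continuous_fst).prodMk continuous_snd).continuousOn ?_
  intro p _
  exact ⟨cl_mem T hT p.1, mem_univ _⟩

end StabAux
section Conv

open StabAux

variable {n d : ℕ} {A B : Type} [MetricSpace A] [CompactSpace A] [Nonempty A]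
  [MetricSpace B] [CompactSpace B] [Nonempty B]

/-- The packed integrand of the lower Hamiltonian, with clamped time variable. -/
def integrand (T : ℝ) (b : ℝ → En n → A → B → En n)
    (σm : ℝ → En n → A → B → Matrix (Fin n) (Fin d) ℝ)
    (f : ℝ → En n → ℝ → En d → A → B → ℝ)
    (z : ℝ × En n × ℝ × En n × (Fin n → Fin n → ℝ)) (c : A × B) : ℝ :=
  (1 / 2) * Matrix.trace (σm (cl T z.1) z.2.1 c.1 c.2 * (σm (cl T z.1) z.2.1 c.1 c.2).transpose
      * Matrix.of z.2.2.2.2)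
    + (inner ℝ (b (cl T z.1) z.2.1 c.1 c.2) z.2.2.2.1 : ℝ)
    + f (cl T z.1) z.2.1 z.2.2.1 (rowMul z.2.2.2.1 (σm (cl T z.1) z.2.1 c.1 c.2)) c.1 c.2

lemma Hinf_eq_integrand {T : ℝ} {b : ℝ → En n → A → B → En n}
    {σm : ℝ → En n → A → B → Matrix (Fin n) (Fin d) ℝ}
    {f : ℝ → En n → ℝ → En d → A → B → ℝ} {t : ℝ} (ht : t ∈ Icc 0 T)
    (x : En n) (r : ℝ) (q : En n) (X : Matrix (Fin n) (Fin n) ℝ) :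
    Hinf A B b σm f t x r q X
      = ⨆ α : A, ⨅ β : B, integrand T b σm f (t, x, r, q, fun i j => X i j) (α, β) := by
  unfold Hinf integrand
  simp only [cl_eq ht]
  rfl

lemma rowMul_continuous_aux {X : Type} [TopologicalSpace X]
    {q : X → En n} {S : X → Matrix (Fin n) (Fin d) ℝ}
    (hq : Continuous q) (hS : Continuous S) :
    Continuous fun p => rowMul (q p) (S p) := by
  have h1 : Continuous fun p => (fun j : Fin d => ∑ i, q p i * S p i j) := by
    refine continuous_pi fun j => continuous_finset_sum _ fun i _ => Continuous.mul ?_ ?_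
    · exact (continuous_apply i).comp ((PiLp.continuous_ofLp 2 fun _ : Fin n => ℝ).comp hq)
    · exact hS.matrix_elem i j
  exact (PiLp.continuous_toLp 2 fun _ : Fin d => ℝ).comp h1

lemma integrand_continuous {T : ℝ} (hT : 0 ≤ T) {b : ℝ → En n → A → B → En n}
    {σm : ℝ → En n → A → B → Matrix (Fin n) (Fin d) ℝ}
    {f : ℝ → En n → ℝ → En d → A → B → ℝ}
    (hbc : ContinuousOn (fun p : ℝ × En n × A × B => b p.1 p.2.1 p.2.2.1 p.2.2.2)
      (Icc 0 T ×ˢ (univ : Set (En n × A × B))))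
    (hσc : ContinuousOn (fun p : ℝ × En n × A × B => σm p.1 p.2.1 p.2.2.1 p.2.2.2)
      (Icc 0 T ×ˢ (univ : Set (En n × A × B))))
    (hfc : ContinuousOn (fun p : ℝ × En n × ℝ × En d × A × B =>
        f p.1 p.2.1 p.2.2.1 p.2.2.2.1 p.2.2.2.2.1 p.2.2.2.2.2)
      (Icc 0 T ×ˢ (univ : Set (En n × ℝ × En d × A × B)))) :
    Continuous fun p : (ℝ × En n × ℝ × En n × (Fin n → Fin n → ℝ)) × A × B =>
      integrand T b σm f p.1 p.2 := by
  have hbC := cont_clamp hT hbc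
  have hσC := cont_clamp hT hσc
  have hfC := cont_clamp hT hfc
  set Z := ℝ × En n × ℝ × En n × (Fin n → Fin n → ℝ)
  have he : Continuous fun p : Z × A × B => ((p.1.1, (p.1.2.1, (p.2.1, p.2.2))) :
      ℝ × En n × A × B) := continuous_fst.fst.prodMk (continuous_fst.snd.fst.prodMk
        (continuous_snd.fst.prodMk continuous_snd.snd))
  have hbZ : Continuous fun p : Z × A × B => b (cl T p.1.1) p.1.2.1 p.2.1 p.2.2 :=
    hbC.comp he
  have hσZ : Continuous fun p : Z × A × B => σm (cl T p.1.1) p.1.2.1 p.2.1 p.2.2 :=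
    hσC.comp he
  have hXpre : Continuous fun p : Z × A × B => p.1.2.2.2.2 := continuous_fst.snd.snd.snd.snd
  have hXZ : Continuous fun p : Z × A × B => (Matrix.of p.1.2.2.2.2 :
      Matrix (Fin n) (Fin n) ℝ) :=
    continuous_matrix fun i j => (continuous_apply j).comp ((continuous_apply i).comp hXpre)
  have hqZ : Continuous fun p : Z × A × B => p.1.2.2.2.1 := continuous_fst.snd.snd.snd.fst
  have htr : Continuous fun p : Z × A × B =>
      (1 / 2 : ℝ) * Matrix.trace (σm (cl T p.1.1) p.1.2.1 p.2.1 p.2.2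
        * (σm (cl T p.1.1) p.1.2.1 p.2.1 p.2.2).transpose * Matrix.of p.1.2.2.2.2) :=
    continuous_const.mul (((hσZ.matrix_mul hσZ.matrix_transpose).matrix_mul hXZ).matrix_trace)
  have hin : Continuous fun p : Z × A × B =>
      (inner ℝ (b (cl T p.1.1) p.1.2.1 p.2.1 p.2.2) p.1.2.2.2.1 : ℝ) :=
    hbZ.inner hqZ
  have hrow : Continuous fun p : Z × A × B =>
      rowMul p.1.2.2.2.1 (σm (cl T p.1.1) p.1.2.1 p.2.1 p.2.2) :=
    rowMul_continuous_aux hqZ hσZ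
  have hf2 : Continuous fun p : Z × A × B =>
      f (cl T p.1.1) p.1.2.1 p.1.2.2.1
        (rowMul p.1.2.2.2.1 (σm (cl T p.1.1) p.1.2.1 p.2.1 p.2.2)) p.2.1 p.2.2 := by
    have htup : Continuous fun p : Z × A × B =>
        ((p.1.1, (p.1.2.1, (p.1.2.2.1, (rowMul p.1.2.2.2.1
          (σm (cl T p.1.1) p.1.2.1 p.2.1 p.2.2), (p.2.1, p.2.2))))) :
          ℝ × En n × ℝ × En d × A × B) := by
      apply Continuous.prodMk continuous_fst.fst
      apply Continuous.prodMk continuous_fst.snd.fst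
      apply Continuous.prodMk continuous_fst.snd.snd.fst
      exact hrow.prodMk (continuous_snd.fst.prodMk continuous_snd.snd)
    exact hfC.comp htup
  exact (htr.add hin).add hf2

end Conv
section Conv2

open StabAux

variable {n d : ℕ} {A B : Type} [MetricSpace A] [CompactSpace A] [Nonempty A]
  [MetricSpace B] [CompactSpace B] [Nonempty B]

lemma Hinf_conv {T : ℝ} (hT : 0 ≤ T) {b : ℝ → En n → A → B → En n}
    {σm : ℝ → En n → A → B → Matrix (Fin n) (Fin d) ℝ}
    (hbc : ContinuousOn (fun p : ℝ × En n × A × B => b p.1 p.2.1 p.2.2.1 p.2.2.2)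
      (Icc 0 T ×ˢ (univ : Set (En n × A × B))))
    (hσc : ContinuousOn (fun p : ℝ × En n × A × B => σm p.1 p.2.1 p.2.2.1 p.2.2.2)
      (Icc 0 T ×ˢ (univ : Set (En n × A × B))))
    {fs : ℕ → ℝ → En n → ℝ → En d → A → B → ℝ}
    {ft : ℝ → En n → ℝ → En d → A → B → ℝ}
    (hftc : ContinuousOn (fun q : ℝ × En n × ℝ × En d × A × B =>
        ft q.1 q.2.1 q.2.2.1 q.2.2.2.1 q.2.2.2.2.1 q.2.2.2.2.2)
      (Icc 0 T ×ˢ (univ : Set (En n × ℝ × En d × A × B))))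
    (hfconv : ∀ Kc : Set (ℝ × En n × ℝ × En d × A × B), IsCompact Kc →
        TendstoUniformlyOn (fun p => fun q : ℝ × En n × ℝ × En d × A × B =>
            fs p q.1 q.2.1 q.2.2.1 q.2.2.2.1 q.2.2.2.2.1 q.2.2.2.2.2)
          (fun q : ℝ × En n × ℝ × En d × A × B =>
            ft q.1 q.2.1 q.2.2.1 q.2.2.2.1 q.2.2.2.2.1 q.2.2.2.2.2) atTop Kc)
    {sk : ℕ → ℝ} {yk : ℕ → En n} {rk : ℕ → ℝ} {qk : ℕ → En n}
    {Xk : ℕ → Matrix (Fin n) (Fin n) ℝ}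
    {t0 : ℝ} {x0 : En n} {r0 : ℝ} {q0 : En n} {X0 : Matrix (Fin n) (Fin n) ℝ}
    (hsk : ∀ k, sk k ∈ Icc 0 T) (ht0 : t0 ∈ Icc 0 T)
    (hs : Tendsto sk atTop (𝓝 t0)) (hy : Tendsto yk atTop (𝓝 x0))
    (hr : Tendsto rk atTop (𝓝 r0)) (hq : Tendsto qk atTop (𝓝 q0))
    (hX : Tendsto Xk atTop (𝓝 X0))
    {pk : ℕ → ℕ} (hpk : Tendsto pk atTop atTop)
    {ε : ℝ} (hε : 0 < ε) :
    ∀ᶠ k in atTop, |Hinf A B b σm (fs (pk k)) (sk k) (yk k) (rk k) (qk k) (Xk k)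
      - Hinf A B b σm ft t0 x0 r0 q0 X0| ≤ ε := by
  classical
  set Z := ℝ × En n × ℝ × En n × (Fin n → Fin n → ℝ) with hZ
  have hX' : Tendsto (fun k => (fun i j => Xk k i j : Fin n → Fin n → ℝ)) atTop
      (𝓝 (fun i j => X0 i j)) := hX
  set zk : ℕ → Z := fun k => (sk k, yk k, rk k, qk k, fun i j => Xk k i j) with hzkdef
  set z : Z := (t0, x0, r0, q0, fun i j => X0 i j) with hzdef
  have hzk : Tendsto zk atTop (𝓝 z) :=
    hs.prodMk_nhds (hy.prodMk_nhds (hr.prodMk_nhds (hq.prodMk_nhds hX')))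
  -- compact sets
  have hSx := hy.isCompact_insert_range
  have hSr := hr.isCompact_insert_range
  have hSq := hq.isCompact_insert_range
  have hSX := hX'.isCompact_insert_range
  set Sx := insert x0 (range yk)
  set Sr := insert r0 (range rk)
  set Sq := insert q0 (range qk)
  set SX := insert (fun i j => X0 i j : Fin n → Fin n → ℝ) (range fun k => fun i j => Xk k i j)
  set S : Set Z := Icc 0 T ×ˢ (Sx ×ˢ (Sr ×ˢ (Sq ×ˢ SX))) with hSdef
  have hS : IsCompact S := isCompact_Icc.prod (hSx.prod (hSr.prod (hSq.prod hSX)))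
  have hzS : ∀ k, zk k ∈ S := fun k =>
    ⟨hsk k, mem_insert_of_mem _ ⟨k, rfl⟩, mem_insert_of_mem _ ⟨k, rfl⟩,
      mem_insert_of_mem _ ⟨k, rfl⟩, mem_insert_of_mem _ ⟨k, rfl⟩⟩
  have hzmem : z ∈ S := ⟨ht0, mem_insert _ _, mem_insert _ _, mem_insert _ _, mem_insert _ _⟩
  -- the limit integrand
  set Φ : Z → A × B → ℝ := fun zz c => integrand T b σm ft zz c with hΦdef
  have hΦc : Continuous fun p : Z × A × B => Φ p.1 p.2 :=
    integrand_continuous hT hbc hσc hftc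
  obtain ⟨Cb, hCb⟩ := isCompact_univ.exists_bound_of_continuousOn
    (f := fun c : A × B => Φ z c)
    ((hΦc.comp (continuous_const.prodMk continuous_id)).continuousOn)
  have E1 := eventually_uniform_close hS hΦc.continuousOn hzS hzmem hzk (half_pos hε)
  -- the compact set for uniform convergence of the generators
  have hσC := cont_clamp hT hσc
  set emb : (ℝ × En n × En n) × A × B → En d := fun p =>
    rowMul p.1.2.2 (σm (cl T p.1.1) p.1.2.1 p.2.1 p.2.2) with hembdef
  have hembc : Continuous emb := by
    refine rowMul_continuous_aux (by fun_prop) ?_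
    exact hσC.comp (by fun_prop :
      Continuous fun p : (ℝ × En n × En n) × A × B => (p.1.1, (p.1.2.1, (p.2.1, p.2.2))))
  set Kz : Set (En d) := emb '' ((Icc 0 T ×ˢ (Sx ×ˢ Sq)) ×ˢ univ) with hKzdef
  have hKzc : IsCompact Kz :=
    (((isCompact_Icc.prod (hSx.prod hSq)).prod isCompact_univ).image hembc)
  set Kc : Set (ℝ × En n × ℝ × En d × A × B) :=
    Icc 0 T ×ˢ (Sx ×ˢ (Sr ×ˢ (Kz ×ˢ (univ : Set (A × B))))) with hKcdef
  have hKc : IsCompact Kc :=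
    isCompact_Icc.prod (hSx.prod (hSr.prod (hKzc.prod isCompact_univ)))
  have huc := hfconv Kc hKc
  rw [Metric.tendstoUniformlyOn_iff] at huc
  have E2 := hpk.eventually (huc (ε/2) (half_pos hε))
  filter_upwards [E1, E2] with k h1 h2
  rw [Hinf_eq_integrand (hsk k), Hinf_eq_integrand ht0]
  refine ciSup_ciInf_abs_le _ _ hε.le
    (fun α β => by simpa [Real.norm_eq_abs] using hCb (α, β) (mem_univ _)) ?_
  intro α β
  set RM : En d := rowMul (qk k) (σm (sk k) (yk k) α β) with hRMdef
  set Pk : ℝ × En n × ℝ × En d × A × B := (sk k, yk k, rk k, RM, α, β) with hPkdef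
  have hPkmem : Pk ∈ Kc := by
    refine ⟨hsk k, mem_insert_of_mem _ ⟨k, rfl⟩, mem_insert_of_mem _ ⟨k, rfl⟩, ?_, mem_univ _⟩
    refine ⟨((sk k, yk k, qk k), (α, β)),
      ⟨⟨hsk k, mem_insert_of_mem _ ⟨k, rfl⟩, mem_insert_of_mem _ ⟨k, rfl⟩⟩, mem_univ _⟩, ?_⟩
    simp only [hembdef, cl_eq (hsk k)]
    rfl
  have hdiff : integrand T b σm (fs (pk k)) (zk k) (α, β) - Φ (zk k) (α, β)
      = fs (pk k) Pk.1 Pk.2.1 Pk.2.2.1 Pk.2.2.2.1 α β - ft Pk.1 Pk.2.1 Pk.2.2.1 Pk.2.2.2.1 α β := by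
    simp only [hΦdef, integrand, hzkdef, cl_eq (hsk k), hPkdef, hRMdef]
    ring
  have hd2 := h2 Pk hPkmem
  rw [Real.dist_eq] at hd2
  have hc1 : |integrand T b σm (fs (pk k)) (zk k) (α, β) - Φ (zk k) (α, β)| ≤ ε / 2 := by
    rw [hdiff]
    rw [abs_sub_comm]
    exact hd2.le
  calc |integrand T b σm (fs (pk k)) (zk k) (α, β) - integrand T b σm ft z (α, β)|
      ≤ |integrand T b σm (fs (pk k)) (zk k) (α, β) - Φ (zk k) (α, β)|
        + |Φ (zk k) (α, β) - Φ z (α, β)| := abs_sub_le _ _ _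
    _ ≤ ε / 2 + ε / 2 := add_le_add hc1 (h1 (α, β))
    _ = ε := by ring

end Conv2
section Pen

open InnerProductSpace

variable {n : ℕ}

/-- Hessian matrix of `y ↦ ‖y - x0‖⁴`. -/
def penMat (x0 y : En n) : Matrix (Fin n) (Fin n) ℝ :=
  Matrix.of fun i j => 8 * ((y - x0) i * (y - x0) j)
    + (if i = j then 4 * ‖y - x0‖ ^ 2 else 0)

lemma penMat_self (x0 : En n) : penMat x0 x0 = 0 := by
  unfold penMat
  ext i j
  simp [Matrix.of_apply]

lemma IsC12.addPen {T : ℝ} {φ φt : ℝ → En n → ℝ} {Dφ : ℝ → En n → En n}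
    {D2φ : ℝ → En n → Matrix (Fin n) (Fin n) ℝ} (h : IsC12 T φ φt Dφ D2φ)
    (K t0 : ℝ) (x0 : En n) :
    IsC12 T (fun s y => φ s y + K * (s - t0) ^ 2 + ‖y - x0‖ ^ 4)
      (fun s y => φt s y + 2 * K * (s - t0))
      (fun s y => Dφ s y + (4 * ‖y - x0‖ ^ 2) • (y - x0))
      (fun s y => D2φ s y + penMat x0 y) := by
  have hvC : ∀ i : Fin n, Continuous fun p : ℝ × En n => (p.2 - x0) i := fun i =>
    (continuous_apply i).comp ((PiLp.continuous_ofLp 2 fun _ : Fin n => ℝ).comp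
      (continuous_snd.sub continuous_const))
  have hnC : Continuous fun p : ℝ × En n => ‖p.2 - x0‖ :=
    (continuous_snd.sub continuous_const).norm
  constructor
  · exact (h.cont.add ((continuous_const.mul
      ((continuous_fst.sub continuous_const).pow 2)).continuousOn)).add
      ((hnC.pow 4).continuousOn)
  · exact h.cont_t.add ((continuous_const.mul
      (continuous_fst.sub continuous_const)).continuousOn)
  · exact h.cont_D.add (((continuous_const.mul (hnC.pow 2)).smul
      (continuous_snd.sub continuous_const)).continuousOn)
  · refine h.cont_D2.add (Continuous.continuousOn ?_)
    refine continuous_matrix fun i j => Continuous.add ?_ ?_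
    · exact continuous_const.mul ((hvC i).mul (hvC j))
    · by_cases hij : i = j
      · simp only [hij, if_true]
        exact continuous_const.mul (hnC.pow 2)
      · simp only [hij, if_false]
        exact continuous_const
  · intro t ht x
    have h2a : HasDerivAt (fun s : ℝ => K * (s - t0) ^ 2) (2 * K * (t - t0)) t := by
      have := (((hasDerivAt_id t).sub_const t0).pow 2).const_mul K
      refine this.congr_deriv ?_
      simp only [id_eq, pow_one, Nat.cast_ofNat, Nat.add_one_sub_one]
      ring
    exact ((h.deriv_t t ht x).add h2a.hasDerivWithinAt).add_const _
  · intro t ht x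
    have hsub : HasFDerivAt (fun y : En n => y - x0) (ContinuousLinearMap.id ℝ (En n)) x :=
      (hasFDerivAt_id x).sub_const x0
    have hns : HasFDerivAt (fun y : En n => ‖y - x0‖ ^ 2)
        (2 • (innerSL ℝ (x - x0)).comp (ContinuousLinearMap.id ℝ (En n))) x := hsub.norm_sq
    have hq : HasFDerivAt (fun y : En n => ‖y - x0‖ ^ 2 * ‖y - x0‖ ^ 2)
        (‖x - x0‖ ^ 2 • (2 • (innerSL ℝ (x - x0)).comp (ContinuousLinearMap.id ℝ (En n)))
          + ‖x - x0‖ ^ 2 • (2 • (innerSL ℝ (x - x0)).comp (ContinuousLinearMap.id ℝ (En n)))) x :=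
      hns.mul hns
    have hq4 : HasFDerivAt (fun y : En n => ‖y - x0‖ ^ 4)
        (‖x - x0‖ ^ 2 • (2 • (innerSL ℝ (x - x0)).comp (ContinuousLinearMap.id ℝ (En n)))
          + ‖x - x0‖ ^ 2 • (2 • (innerSL ℝ (x - x0)).comp (ContinuousLinearMap.id ℝ (En n)))) x := by
      have hfe : (fun y : En n => ‖y - x0‖ ^ 4)
          = fun y : En n => ‖y - x0‖ ^ 2 * ‖y - x0‖ ^ 2 := by
        funext y; ring
      rw [hfe]; exact hq
    have hφf : HasFDerivAt (fun y => φ t y) (toDual ℝ (En n) (Dφ t x)) x :=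
      (h.grad_x t ht x).hasFDerivAt
    rw [hasGradientAt_iff_hasFDerivAt]
    refine ((hφf.add_const (K * (t - t0) ^ 2)).add hq4).congr_fderiv ?_
    refine ContinuousLinearMap.ext fun w => ?_
    simp only [ContinuousLinearMap.add_apply, ContinuousLinearMap.smul_apply,
      ContinuousLinearMap.coe_smul', Pi.smul_apply, ContinuousLinearMap.comp_apply,
      ContinuousLinearMap.id_apply, innerSL_apply_apply, toDual_apply_apply, inner_add_left,
      real_inner_smul_left, smul_eq_mul]
    ring
  · intro t ht x
    have hsub : HasFDerivAt (fun y : En n => y - x0) (ContinuousLinearMap.id ℝ (En n)) x :=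
      (hasFDerivAt_id x).sub_const x0
    have hns : HasFDerivAt (fun y : En n => ‖y - x0‖ ^ 2)
        (2 • (innerSL ℝ (x - x0)).comp (ContinuousLinearMap.id ℝ (En n))) x := hsub.norm_sq
    have hc : HasFDerivAt (fun y : En n => 4 * ‖y - x0‖ ^ 2)
        ((4 : ℝ) • (2 • (innerSL ℝ (x - x0)).comp (ContinuousLinearMap.id ℝ (En n)))) x :=
      hns.const_mul 4
    have h2 := hc.smul hsub
    refine ((h.hess_x t ht x).add h2).congr_fderiv ?_
    have hma : Matrix.toEuclideanLin (D2φ t x + penMat x0 x)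
        = Matrix.toEuclideanLin (D2φ t x) + Matrix.toEuclideanLin (penMat x0 x) :=
      map_add _ _ _
    rw [hma, map_add]
    congr 1
    refine ContinuousLinearMap.ext fun w => ?_
    refine PiLp.ext fun j => ?_
    have hlhs : (LinearMap.toContinuousLinearMap (Matrix.toEuclideanLin (penMat x0 x)) w) j
        = ∑ i, penMat x0 x j i * w i := by
      rfl
    rw [hlhs]
    have hrhs : (((4 * ‖x - x0‖ ^ 2) • ContinuousLinearMap.id ℝ (En n)
        + ((4 : ℝ) • (2 • (innerSL ℝ (x - x0)).comp
          (ContinuousLinearMap.id ℝ (En n)))).smulRight (x - x0)) w) j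
        = 4 * ‖x - x0‖ ^ 2 * w j
          + 4 * (2 * (∑ i, (x - x0) i * w i)) * (x - x0) j := by
      simp only [ContinuousLinearMap.add_apply, ContinuousLinearMap.smul_apply,
        ContinuousLinearMap.smulRight_apply, ContinuousLinearMap.comp_apply,
        ContinuousLinearMap.id_apply, innerSL_apply_apply, smul_eq_mul]
      have hin : (inner ℝ (x - x0) w : ℝ) = ∑ i, (x - x0) i * w i := by
        simp [PiLp.inner_apply, RCLike.inner_apply, conj_trivial]
        exact Finset.sum_congr rfl fun i _ => mul_comm _ _
      rw [PiLp.add_apply, PiLp.smul_apply, PiLp.smul_apply, hin]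
      simp [smul_eq_mul]
    rw [hrhs]
    have hterm : ∀ i : Fin n, penMat x0 x j i * w i
        = 8 * ((x - x0) j) * ((x - x0) i * w i)
          + (if i = j then 4 * ‖x - x0‖ ^ 2 * w i else 0) := by
      intro i
      unfold penMat
      by_cases hij : j = i
      · subst hij; simp [Matrix.of_apply]; ring
      · have hij' : ¬ i = j := fun hh => hij hh.symm
        simp [Matrix.of_apply, hij, hij']
        ring
    rw [Finset.sum_congr rfl fun i _ => hterm i, Finset.sum_add_distrib]
    rw [Finset.sum_ite_eq' Finset.univ j (fun i => 4 * ‖x - x0‖ ^ 2 * w i)]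
    simp only [Finset.mem_univ, if_true, ← Finset.mul_sum]
    ring

end Pen
set_option maxHeartbeats 1600000 in
/-- Stability of viscosity subsolutions under monotone decreasing
limits of solutions. -/
theorem stability_subsolution_decreasing
    {n d : ℕ} (hn : 1 ≤ n) (hd : 1 ≤ d) (T : ℝ) (hT : 0 < T)
    (A B : Type) [MetricSpace A] [CompactSpace A] [Nonempty A]
    [MetricSpace B] [CompactSpace B] [Nonempty B]
    (b : ℝ → En n → A → B → En n)
    (σm : ℝ → En n → A → B → Matrix (Fin n) (Fin d) ℝ)
    (hH1 : HypH1 T A B b σm)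
    (fs : ℕ → ℝ → En n → ℝ → En d → A → B → ℝ)
    (ft : ℝ → En n → ℝ → En d → A → B → ℝ)
    (hfc : ∀ p, ContinuousOn (fun q : ℝ × En n × ℝ × En d × A × B => fs p q.1 q.2.1 q.2.2.1 q.2.2.2.1 q.2.2.2.2.1 q.2.2.2.2.2) (Icc 0 T ×ˢ (univ : Set (En n × ℝ × En d × A × B))))
    (hftc : ContinuousOn (fun q : ℝ × En n × ℝ × En d × A × B => ft q.1 q.2.1 q.2.2.1 q.2.2.2.1 q.2.2.2.2.1 q.2.2.2.2.2) (Icc 0 T ×ˢ (univ : Set (En n × ℝ × En d × A × B))))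
    (hfconv : ∀ Kc : Set (ℝ × En n × ℝ × En d × A × B), IsCompact Kc →
        TendstoUniformlyOn (fun p => fun q : ℝ × En n × ℝ × En d × A × B => fs p q.1 q.2.1 q.2.2.1 q.2.2.2.1 q.2.2.2.2.1 q.2.2.2.2.2)
          (fun q : ℝ × En n × ℝ × En d × A × B => ft q.1 q.2.1 q.2.2.1 q.2.2.2.1 q.2.2.2.2.1 q.2.2.2.2.2) atTop Kc)
    (ℓ ℓ' : ℝ → En n → ℝ) (G : En n → ℝ)
    (hℓc : ContinuousOn (fun p : ℝ × En n => ℓ p.1 p.2) (Icc 0 T ×ˢ univ))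
    (hℓ'c : ContinuousOn (fun p : ℝ × En n => ℓ' p.1 p.2) (Icc 0 T ×ˢ univ))
    (hℓbd : ∃ M, ∀ t ∈ Icc (0:ℝ) T, ∀ x : En n, |ℓ t x| ≤ M ∧ |ℓ' t x| ≤ M)
    (hGc : Continuous G) (hGbd : ∃ M, ∀ x : En n, |G x| ≤ M)
    (hord : ∀ t ∈ Icc (0:ℝ) T, ∀ x : En n, ℓ t x < ℓ' t x)
    (hordT : ∀ x : En n, ℓ T x ≤ G x ∧ G x ≤ ℓ' T x)
    (w : ℕ → ℝ → En n → ℝ)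
    (hwsol : ∀ p, IsSubsolution T (Hinf A B b σm (fs p)) ℓ ℓ' G (w p)
        ∧ IsSupersolution T (Hinf A B b σm (fs p)) ℓ ℓ' G (w p))
    (hwc : ∀ p, ContinuousOn (fun q : ℝ × En n => w p q.1 q.2) (Icc 0 T ×ˢ univ))
    (hwobst : ∀ p, ∀ t ∈ Icc (0:ℝ) T, ∀ x : En n, ℓ t x ≤ w p t x ∧ w p t x ≤ ℓ' t x)
    (w0 : ℝ → En n → ℝ)
    (hw0 : ∀ t ∈ Icc (0:ℝ) T, ∀ x : En n,
        Tendsto (fun p => w p t x) atTop (𝓝 (w0 t x)))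
    (hfmono : ∀ p, ∀ t ∈ Icc (0:ℝ) T, ∀ (x : En n) (y : ℝ) (z : En d) (α : A) (β : B),
        fs (p+1) t x y z α β ≤ fs p t x y z α β)
    (hwmono : ∀ p, ∀ t ∈ Icc (0:ℝ) T, ∀ x : En n, w (p+1) t x ≤ w p t x) :
    IsSubsolution T (Hinf A B b σm ft) ℓ ℓ' G w0 := by
  classical
  -- basic facts
  obtain ⟨M0, hM0⟩ := hℓbd
  set M : ℝ := max M0 0 with hMdef
  have hMnn : (0 : ℝ) ≤ M := le_max_right _ _
  have hMl : ∀ t ∈ Icc (0:ℝ) T, ∀ x : En n, |ℓ t x| ≤ M ∧ |ℓ' t x| ≤ M := by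
    intro t ht x
    exact ⟨(hM0 t ht x).1.trans (le_max_left _ _), (hM0 t ht x).2.trans (le_max_left _ _)⟩
  have hanti : ∀ s, s ∈ Icc (0:ℝ) T → ∀ y : En n, Antitone fun p => w p s y :=
    fun s hs y => antitone_nat_of_succ_le fun p => hwmono p s hs y
  have hw0le : ∀ p, ∀ s ∈ Icc (0:ℝ) T, ∀ y : En n, w0 s y ≤ w p s y := by
    intro p s hs y
    refine le_of_tendsto (hw0 s hs y) (eventually_atTop.2 ⟨p, fun q hq => hanti s hs y hq⟩)
  have hw0l : ∀ s ∈ Icc (0:ℝ) T, ∀ y : En n, ℓ s y ≤ w0 s y := fun s hs y =>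
    ge_of_tendsto (hw0 s hs y) (Eventually.of_forall fun p => (hwobst p s hs y).1)
  have hw0u : ∀ s ∈ Icc (0:ℝ) T, ∀ y : En n, w0 s y ≤ ℓ' s y := fun s hs y =>
    le_of_tendsto (hw0 s hs y) (Eventually.of_forall fun p => (hwobst p s hs y).2)
  refine ⟨?_, ?_, ?_⟩
  · -- upper semicontinuity
    intro z hz y hy
    obtain ⟨P, hP⟩ := ((hw0 z.1 hz.1 z.2).eventually_lt_const hy).exists
    have hcw : Tendsto (fun q : ℝ × En n => w P q.1 q.2) (𝓝[Icc 0 T ×ˢ univ] z)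
        (𝓝 (w P z.1 z.2)) := (hwc P z hz).tendsto
    filter_upwards [hcw.eventually_lt_const hP, self_mem_nhdsWithin] with z' h1 h2
    exact lt_of_le_of_lt (hw0le P z'.1 h2.1 z'.2) h1
  · -- terminal condition
    intro x
    exact le_of_tendsto (hw0 T ⟨hT.le, le_refl T⟩ x)
      (Eventually.of_forall fun p => (hwsol p).1.2.1 x)
  -- viscosity inequality
  intro φ φt Dφ D2φ hC12 t0 ht0 x0 hmax
  have ht0T : t0 ∈ Icc 0 T := ⟨ht0.1, ht0.2.le⟩
  by_cases hcase : w0 t0 x0 ≤ ℓ t0 x0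
  · exact min_le_of_left_le (by linarith)
  push_neg at hcase
  refine min_le_of_right_le ?_
  refine max_le ?_ (by linarith [hw0u t0 ht0T x0])
  -- main analysis
  set c0 : ℝ := w0 t0 x0 - φ t0 x0 with hc0def
  have hφlb : ∀ s ∈ Ico (0:ℝ) T, ∀ y : En n, -φ s y ≤ c0 + M := by
    intro s hs y
    have hsT : s ∈ Icc (0:ℝ) T := ⟨hs.1, hs.2.le⟩
    have h1 := hmax s hs y
    have h2 := hw0l s hsT y
    have h3 := (abs_le.1 (hMl s hsT y).1).1
    linarith
  clear_value c0
  set T' : ℝ := (t0 + T) / 2 with hT'def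
  have hT'1 : t0 < T' := by simp only [hT'def]; linarith [ht0.2]
  have hT'2 : T' < T := by simp only [hT'def]; linarith [ht0.2]
  have hT'0 : (0:ℝ) ≤ T' := le_trans ht0.1 hT'1.le
  set K : ℝ := (2 * M + 1) / (T' - t0) ^ 2 with hKdef
  have hKpos : 0 < K := by
    exact div_pos (by linarith) (pow_pos (sub_pos.2 hT'1) 2)
  set R : ℝ := 2 * M + 2 with hRdef
  have hR1 : (1:ℝ) ≤ R := by simp only [hRdef]; linarith
  set χ : ℝ → En n → ℝ := fun s y => φ s y + K * (s - t0) ^ 2 + ‖y - x0‖ ^ 4 with hχdef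
  set χt : ℝ → En n → ℝ := fun s y => φt s y + 2 * K * (s - t0) with hχtdef
  set Dχ : ℝ → En n → En n := fun s y => Dφ s y + (4 * ‖y - x0‖ ^ 2) • (y - x0) with hDχdef
  set D2χ : ℝ → En n → Matrix (Fin n) (Fin n) ℝ := fun s y => D2φ s y + penMat x0 y
    with hD2χdef
  have hχ : IsC12 T χ χt Dχ D2χ := hC12.addPen K t0 x0
  have hχ00 : χ t0 x0 = φ t0 x0 := by simp [hχdef]
  have hχt00 : χt t0 x0 = φt t0 x0 := by simp [hχtdef]
  have hDχ00 : Dχ t0 x0 = Dφ t0 x0 := by simp [hDχdef]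
  have hD2χ00 : D2χ t0 x0 = D2φ t0 x0 := by simp [hD2χdef, penMat_self]
  clear_value M T' K R χ χt Dχ D2χ
  set Kset : Set (ℝ × En n) := Icc 0 T' ×ˢ Metric.closedBall x0 R with hKsetdef
  have hKcomp : IsCompact Kset := isCompact_Icc.prod (isCompact_closedBall x0 R)
  have ht0K : (t0, x0) ∈ Kset := by
    refine ⟨⟨ht0.1, hT'1.le⟩, ?_⟩
    simp only [Metric.mem_closedBall, dist_self]
    linarith
  have hKsub1 : Kset ⊆ Icc 0 T ×ˢ (univ : Set (En n)) := by
    rintro ⟨s, y⟩ hz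
    exact ⟨⟨hz.1.1, hz.1.2.trans hT'2.le⟩, trivial⟩
  have hKsub2 : Kset ⊆ Ico 0 T ×ˢ (univ : Set (En n)) := by
    rintro ⟨s, y⟩ hz
    exact ⟨⟨hz.1.1, lt_of_le_of_lt hz.1.2 hT'2⟩, trivial⟩
  have hpen_out : ∀ s ∈ Ico (0:ℝ) T, ∀ y : En n, (s, y) ∉ Kset →
      2 * M + 1 ≤ K * (s - t0) ^ 2 + ‖y - x0‖ ^ 4 := by
    intro s hs y hnot
    have hcases : ¬ (s ∈ Icc 0 T') ∨ ¬ (y ∈ Metric.closedBall x0 R) := by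
      by_contra hcon
      push_neg at hcon
      exact hnot ⟨hcon.1, hcon.2⟩
    rcases hcases with hcs | hcy
    · have hs' : T' < s := by
        rcases lt_or_ge T' s with h | h
        · exact h
        · exact absurd ⟨hs.1, h⟩ hcs
      have h1 : (T' - t0) ^ 2 ≤ (s - t0) ^ 2 := by nlinarith
      have h2 : K * (T' - t0) ^ 2 ≤ K * (s - t0) ^ 2 :=
        mul_le_mul_of_nonneg_left h1 hKpos.le
      have h3 : K * (T' - t0) ^ 2 = 2 * M + 1 := by
        rw [hKdef, div_mul_cancel₀ _ (pow_ne_zero 2 (sub_ne_zero.2 hT'1.ne'))]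
      have h4 : (0:ℝ) ≤ ‖y - x0‖ ^ 4 := by positivity
      linarith
    · have hcy' : R < ‖y - x0‖ := by
        rw [Metric.mem_closedBall, not_le, dist_eq_norm] at hcy
        exact hcy
      have h1 : (1:ℝ) ≤ ‖y - x0‖ := by linarith
      have h2 : ‖y - x0‖ ≤ ‖y - x0‖ ^ 4 := by
        nlinarith [sq_nonneg (‖y - x0‖ ^ 2 - 1), sq_nonneg (‖y - x0‖ - 1)]
      have h3 : (0:ℝ) ≤ K * (s - t0) ^ 2 := by positivity
      simp only [hRdef] at hcy'
      linarith
  -- maximizers of `w p - χ` over `Kset`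
  have hχcont : ContinuousOn (fun q : ℝ × En n => χ q.1 q.2) (Ico 0 T ×ˢ univ) := hχ.cont
  have hex : ∀ p, ∃ z : ℝ × En n, z ∈ Kset ∧
      IsMaxOn (fun q : ℝ × En n => w p q.1 q.2 - χ q.1 q.2) Kset z := by
    intro p
    exact hKcomp.exists_isMaxOn ⟨(t0, x0), ht0K⟩
      (((hwc p).mono hKsub1).sub (hχcont.mono hKsub2))
  choose zp hzpK hzpmax using hex
  have htpIco : ∀ p, (zp p).1 ∈ Ico (0:ℝ) T := fun p =>
    ⟨(hzpK p).1.1, lt_of_le_of_lt (hzpK p).1.2 hT'2⟩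
  have htpIcc : ∀ p, (zp p).1 ∈ Icc (0:ℝ) T := fun p =>
    ⟨(htpIco p).1, (htpIco p).2.le⟩
  -- global maximality
  have hglob : ∀ p, ∀ s ∈ Ico (0:ℝ) T, ∀ y : En n,
      w p s y - χ s y ≤ w p (zp p).1 (zp p).2 - χ (zp p).1 (zp p).2 := by
    intro p s hs y
    by_cases hmem : (s, y) ∈ Kset
    · exact isMaxOn_iff.1 (hzpmax p) (s, y) hmem
    · have h1 := hpen_out s hs y hmem
      have hsT : s ∈ Icc (0:ℝ) T := ⟨hs.1, hs.2.le⟩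
      have h2 : w p s y ≤ M :=
        le_trans (hwobst p s hsT y).2 (abs_le.1 (hMl s hsT y).2).2
      have h3 := hφlb s hs y
      have h4 := isMaxOn_iff.1 (hzpmax p) (t0, x0) ht0K
      have h5 := hw0le p t0 ht0T x0
      have h6 : χ s y = φ s y + (K * (s - t0) ^ 2 + ‖y - x0‖ ^ 4) := by
        simp only [hχdef]; ring
      have h7 : w p s y - χ s y ≤ c0 - 1 := by
        rw [h6]; linarith
      have h8 : c0 ≤ w p t0 x0 - χ t0 x0 := by rw [hχ00]; linarith
      calc w p s y - χ s y ≤ c0 - 1 := h7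
        _ ≤ w p t0 x0 - χ t0 x0 := by linarith
        _ ≤ w p (zp p).1 (zp p).2 - χ (zp p).1 (zp p).2 :=
            isMaxOn_iff.1 (hzpmax p) (t0, x0) ht0K
  -- subsolution inequality at the maximizers
  have hsubk : ∀ p, min (w p (zp p).1 (zp p).2 - ℓ (zp p).1 (zp p).2)
      (max (-(χt (zp p).1 (zp p).2) - Hinf A B b σm (fs p) (zp p).1 (zp p).2
          (w p (zp p).1 (zp p).2) (Dχ (zp p).1 (zp p).2) (D2χ (zp p).1 (zp p).2))
        (w p (zp p).1 (zp p).2 - ℓ' (zp p).1 (zp p).2)) ≤ 0 := by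
    intro p
    exact (hwsol p).1.2.2 χ χt Dχ D2χ hχ (zp p).1 (htpIco p) (zp p).2 (hglob p)
  -- convergent subsequence of maximizers
  obtain ⟨⟨tb, xb⟩, hzbK, ψ, hψmono, hψlim⟩ := hKcomp.tendsto_subseq fun p => hzpK p
  have hψtop : Tendsto ψ atTop atTop := hψmono.tendsto_atTop
  have hzbIcc : (tb, xb) ∈ Icc 0 T ×ˢ (univ : Set (En n)) := hKsub1 hzbK
  have hzbIco : (tb, xb) ∈ Ico 0 T ×ˢ (univ : Set (En n)) := hKsub2 hzbK
  have hwithinIcc : Tendsto (fun k => zp (ψ k)) atTop (𝓝[Icc 0 T ×ˢ univ] (tb, xb)) :=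
    tendsto_nhdsWithin_of_tendsto_nhds_of_eventually_within _ hψlim
      (Eventually.of_forall fun k => hKsub1 (hzpK (ψ k)))
  have hwithinIco : Tendsto (fun k => zp (ψ k)) atTop (𝓝[Ico 0 T ×ˢ univ] (tb, xb)) :=
    tendsto_nhdsWithin_of_tendsto_nhds_of_eventually_within _ hψlim
      (Eventually.of_forall fun k => hKsub2 (hzpK (ψ k)))
  have hχlimb : Tendsto (fun k => χ (zp (ψ k)).1 (zp (ψ k)).2) atTop (𝓝 (χ tb xb)) :=
    ((hχcont (tb, xb) hzbIco).tendsto).comp hwithinIco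
  have hq_lim : ∀ q, Tendsto
      (fun k => w q (zp (ψ k)).1 (zp (ψ k)).2 - χ (zp (ψ k)).1 (zp (ψ k)).2) atTop
      (𝓝 (w q tb xb - χ tb xb)) := fun q =>
    (((hwc q (tb, xb) hzbIcc).tendsto).comp hwithinIcc).sub hχlimb
  have hck : Tendsto (fun k => w (ψ k) t0 x0 - φ t0 x0) atTop (𝓝 c0) := by
    rw [hc0def]
    exact ((hw0 t0 ht0T x0).comp hψtop).sub_const (φ t0 x0)
  have hlower : ∀ k, w (ψ k) t0 x0 - φ t0 x0
      ≤ w (ψ k) (zp (ψ k)).1 (zp (ψ k)).2 - χ (zp (ψ k)).1 (zp (ψ k)).2 := by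
    intro k
    have := isMaxOn_iff.1 (hzpmax (ψ k)) (t0, x0) ht0K
    rw [hχ00] at this
    exact this
  have hupper : ∀ q, ∀ᶠ k in atTop,
      w (ψ k) (zp (ψ k)).1 (zp (ψ k)).2 - χ (zp (ψ k)).1 (zp (ψ k)).2
        ≤ w q (zp (ψ k)).1 (zp (ψ k)).2 - χ (zp (ψ k)).1 (zp (ψ k)).2 := by
    intro q
    refine eventually_atTop.2 ⟨q, fun k hk => ?_⟩
    have hqk : q ≤ ψ k := le_trans hk (hψmono.le_apply)
    exact sub_le_sub_right
      (hanti (zp (ψ k)).1 (htpIcc (ψ k)) (zp (ψ k)).2 hqk) _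
  have hc0leDq : ∀ q, c0 ≤ w q tb xb - χ tb xb := by
    intro q
    refine le_of_tendsto_of_tendsto hck (hq_lim q) ?_
    filter_upwards [hupper q] with k hk
    exact le_trans (hlower k) hk
  have hDlim : Tendsto (fun q => w q tb xb - χ tb xb) atTop
      (𝓝 (w0 tb xb - χ tb xb)) := (hw0 tb hzbIcc.1 xb).sub_const _
  have hc0le : c0 ≤ w0 tb xb - χ tb xb :=
    ge_of_tendsto hDlim (Eventually.of_forall hc0leDq)
  -- identify the limit point
  have hpenb : K * (tb - t0) ^ 2 + ‖xb - x0‖ ^ 4 ≤ 0 := by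
    have h1 := hmax tb hzbIco.1 xb
    have h2 : χ tb xb = φ tb xb + (K * (tb - t0) ^ 2 + ‖xb - x0‖ ^ 4) := by
      simp only [hχdef]; ring
    rw [h2] at hc0le
    linarith
  have hA : (0:ℝ) ≤ K * (tb - t0) ^ 2 := by positivity
  have hB : (0:ℝ) ≤ ‖xb - x0‖ ^ 4 := by positivity
  have htb : tb = t0 := by
    have h1 : K * (tb - t0) ^ 2 = 0 := by linarith
    have h2 : (tb - t0) ^ 2 = 0 := by
      rcases mul_eq_zero.1 h1 with h | h
      · exact absurd h hKpos.ne'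
      · exact h
    exact sub_eq_zero.1 (sq_eq_zero_iff.1 h2)
  have hxb : xb = x0 := by
    have h1 : ‖xb - x0‖ ^ 4 = 0 := by linarith
    have h2 : ‖xb - x0‖ = 0 :=
      (pow_eq_zero_iff (by norm_num : (4:ℕ) ≠ 0)).1 h1
    exact sub_eq_zero.1 (norm_eq_zero.1 h2)
  subst htb
  subst hxb
  -- value convergence along the subsequence
  have hDlim' : Tendsto (fun q => w q tb xb - χ tb xb) atTop (𝓝 c0) := by
    have hle : w0 tb xb - χ tb xb = c0 := by rw [hχ00, hc0def]
    rw [← hle]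
    exact hDlim
  have hskt : Tendsto
      (fun k => w (ψ k) (zp (ψ k)).1 (zp (ψ k)).2 - χ (zp (ψ k)).1 (zp (ψ k)).2) atTop
      (𝓝 c0) := by
    refine Metric.tendsto_nhds.2 fun ε hε => ?_
    obtain ⟨q, hq⟩ := (hDlim'.eventually_lt_const
      (lt_add_of_pos_right c0 (half_pos hε))).exists
    have E1 := (hq_lim q).eventually_lt_const hq
    have E2 := hupper q
    have E3 := hck.eventually_const_lt (by linarith : c0 - ε/2 < c0)
    filter_upwards [E1, E2, E3] with k h1 h2 h3
    rw [Real.dist_eq, abs_sub_lt_iff]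
    constructor
    · linarith
    · linarith [hlower k]
  have hvk : Tendsto (fun k => w (ψ k) (zp (ψ k)).1 (zp (ψ k)).2) atTop
      (𝓝 (w0 tb xb)) := by
    have h1 := hskt.add hχlimb
    have h2 : (fun k => (w (ψ k) (zp (ψ k)).1 (zp (ψ k)).2
        - χ (zp (ψ k)).1 (zp (ψ k)).2) + χ (zp (ψ k)).1 (zp (ψ k)).2)
        = fun k => w (ψ k) (zp (ψ k)).1 (zp (ψ k)).2 := by
      funext k; ring
    have h3 : c0 + χ tb xb = w0 tb xb := by rw [hχ00, hc0def]; ring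
    rw [h2, h3] at h1
    exact h1
  -- tendsto of the test-function data
  have htk : Tendsto (fun k => (zp (ψ k)).1) atTop (𝓝 tb) :=
    (continuous_fst.tendsto (tb, xb)).comp hψlim
  have hxk : Tendsto (fun k => (zp (ψ k)).2) atTop (𝓝 xb) :=
    (continuous_snd.tendsto (tb, xb)).comp hψlim
  have hχt_lim : Tendsto (fun k => χt (zp (ψ k)).1 (zp (ψ k)).2) atTop
      (𝓝 (φt tb xb)) := by
    have := ((hχ.cont_t (tb, xb) hzbIco).tendsto).comp hwithinIco
    rw [hχt00] at this
    exact this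
  have hDχ_lim : Tendsto (fun k => Dχ (zp (ψ k)).1 (zp (ψ k)).2) atTop
      (𝓝 (Dφ tb xb)) := by
    have := ((hχ.cont_D (tb, xb) hzbIco).tendsto).comp hwithinIco
    rw [hDχ00] at this
    exact this
  have hD2χ_lim : Tendsto (fun k => D2χ (zp (ψ k)).1 (zp (ψ k)).2) atTop
      (𝓝 (D2φ tb xb)) := by
    have := ((hχ.cont_D2 (tb, xb) hzbIco).tendsto).comp hwithinIco
    rw [hD2χ00] at this
    exact this
  have hℓlim : Tendsto (fun k => ℓ (zp (ψ k)).1 (zp (ψ k)).2) atTop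
      (𝓝 (ℓ tb xb)) := ((hℓc (tb, xb) hzbIcc).tendsto).comp hwithinIcc
  -- eventually above the obstacle
  have hvkℓ : ∀ᶠ k in atTop, ℓ (zp (ψ k)).1 (zp (ψ k)).2
      < w (ψ k) (zp (ψ k)).1 (zp (ψ k)).2 := hℓlim.eventually_lt hvk hcase
  have hH_k : ∀ᶠ k in atTop, -(χt (zp (ψ k)).1 (zp (ψ k)).2)
      - Hinf A B b σm (fs (ψ k)) (zp (ψ k)).1 (zp (ψ k)).2
        (w (ψ k) (zp (ψ k)).1 (zp (ψ k)).2)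
        (Dχ (zp (ψ k)).1 (zp (ψ k)).2) (D2χ (zp (ψ k)).1 (zp (ψ k)).2) ≤ 0 := by
    filter_upwards [hvkℓ] with k hk
    have h := hsubk (ψ k)
    rcases min_le_iff.1 h with h1 | h1
    · linarith
    · exact (max_le_iff.1 h1).1
  -- pass to the limit
  refine le_of_forall_pos_le_add fun ε hε => ?_
  have hconv := Hinf_conv (n := n) (d := d) (A := A) (B := B) hT.le hH1.1 hH1.2.1 hftc hfconv
    (fun k => htpIcc (ψ k)) hzbIcc.1 htk hxk hvk hDχ_lim hD2χ_lim hψtop (half_pos hε)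
  have hχtd := Metric.tendsto_nhds.1 hχt_lim (ε / 2) (half_pos hε)
  obtain ⟨k, h1, h2, h3⟩ := (hH_k.and (hconv.and hχtd)).exists
  rw [Real.dist_eq] at h3
  have h2' := abs_le.1 h2
  have h3' := abs_lt.1 h3
  linarith [h2'.1, h2'.2, h3'.1, h3'.2]
end
end

section
/- Approximation of strict local maxima along a decreasing sequence: let D := [0,T)×ℝⁿ, let (w^p)_{p∈ℕ} be continuous functions D → ℝ with w^{p+1} ≤ w^p pointwise, converging pointwise to a function w⁰ : D → ℝ, let φ : D → ℝ be continuous, and let (t,x) ∈ D be a strict local maximum point of w⁰ − φ. Then there exists a sequence (t_p, x_p) in D converging to (t,x) such that, for all sufficiently large p, (t_p, x_p) is a local maximum point of w^p − φ, and lim_{p→∞} w^p(t_p, x_p) = w⁰(t,x). -/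
open Set Filter Topology

noncomputable section

/-- Approximation of strict local maxima along a decreasing
sequence of continuous functions. -/
theorem strict_local_max_approximation
    {n : ℕ} (hn : 1 ≤ n) (T : ℝ) (hT : 0 < T)
    (w : ℕ → ℝ → En n → ℝ)
    (hwc : ∀ p, ContinuousOn (fun q : ℝ × En n => w p q.1 q.2) (Ico 0 T ×ˢ univ))
    (hwmono : ∀ p, ∀ t ∈ Ico (0:ℝ) T, ∀ x : En n, w (p+1) t x ≤ w p t x)
    (w0 : ℝ → En n → ℝ)
    (hconv : ∀ t ∈ Ico (0:ℝ) T, ∀ x : En n,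
      Tendsto (fun p => w p t x) atTop (𝓝 (w0 t x)))
    (φ : ℝ → En n → ℝ)
    (hφ : ContinuousOn (fun q : ℝ × En n => φ q.1 q.2) (Ico 0 T ×ˢ univ))
    (t : ℝ) (x : En n) (ht : t ∈ Ico (0:ℝ) T)
    (hmax : ∃ δ > (0:ℝ), ∀ s ∈ Ico (0:ℝ) T, ∀ y : En n,
      |s - t| < δ → ‖y - x‖ < δ → (s, y) ≠ (t, x) →
      w0 s y - φ s y < w0 t x - φ t x) :
    ∃ (tp : ℕ → ℝ) (xp : ℕ → En n),
      (∀ p, tp p ∈ Ico (0:ℝ) T)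
      ∧ Tendsto tp atTop (𝓝 t) ∧ Tendsto xp atTop (𝓝 x)
      ∧ (∀ᶠ p in atTop, ∃ δ > (0:ℝ), ∀ s ∈ Ico (0:ℝ) T, ∀ y : En n,
          |s - tp p| < δ → ‖y - xp p‖ < δ →
          w p s y - φ s y ≤ w p (tp p) (xp p) - φ (tp p) (xp p))
      ∧ Tendsto (fun p => w p (tp p) (xp p)) atTop (𝓝 (w0 t x)) := by
  classical
  obtain ⟨δ, hδ, hstrict⟩ := hmax
  set r : ℝ := min (δ / 2) ((T - t) / 2) with hrdef
  have hr0 : 0 < r := lt_min (by linarith) (by linarith [ht.2])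
  have hrδ : r < δ := lt_of_le_of_lt (min_le_left _ _) (by linarith)
  have hrT : t + r < T := by
    have h2 : r ≤ (T - t) / 2 := min_le_right _ _
    linarith
  set a0 : ℝ := max 0 (t - r) with ha0def
  set K : Set (ℝ × En n) := Icc a0 (t + r) ×ˢ Metric.closedBall x r with hKdef
  have hKc : IsCompact K := isCompact_Icc.prod (isCompact_closedBall x r)
  have htK : (t, x) ∈ K :=
    ⟨⟨max_le ht.1 (by linarith), by linarith⟩, Metric.mem_closedBall_self hr0.le⟩
  have hKsub : K ⊆ Ico 0 T ×ˢ (univ : Set (En n)) := by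
    rintro ⟨s, y⟩ ⟨⟨hs1, hs2⟩, -⟩
    exact ⟨⟨le_trans (le_max_left _ _) hs1, lt_of_le_of_lt hs2 hrT⟩, trivial⟩
  -- monotonicity facts
  have hanti : ∀ s ∈ Ico (0:ℝ) T, ∀ y : En n, Antitone fun p => w p s y := by
    intro s hs y
    exact antitone_nat_of_succ_le fun p => hwmono p s hs y
  have hge : ∀ (p : ℕ), ∀ s ∈ Ico (0:ℝ) T, ∀ y : En n, w0 s y ≤ w p s y := by
    intro p s hs y
    refine le_of_tendsto (hconv s hs y) ?_
    filter_upwards [eventually_ge_atTop p] with m hm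
    exact hanti s hs y hm
  -- continuity of the penalized functions on K
  set g : ℕ → ℝ × En n → ℝ := fun p z => w p z.1 z.2 - φ z.1 z.2 with hgdef
  have hgK : ∀ q : ℕ, ContinuousOn (g q) K :=
    fun q => ((hwc q).sub hφ).mono hKsub
  have key : ∀ (q : ℕ) (u : ℕ → ℝ × En n) (c : ℝ × En n), c ∈ K → (∀ k, u k ∈ K) →
      Tendsto u atTop (𝓝 c) → Tendsto (fun k => g q (u k)) atTop (𝓝 (g q c)) := by
    intro q u c hc hu hconv'
    exact (hgK q c hc).tendsto.comp
      (tendsto_nhdsWithin_of_tendsto_nhds_of_eventually_within u hconv'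
        (Eventually.of_forall hu))
  -- maximizers on K
  have hex : ∀ p : ℕ, ∃ z ∈ K, ∀ z' ∈ K, g p z' ≤ g p z := by
    intro p
    obtain ⟨z, hzK, hz⟩ := hKc.exists_isMaxOn ⟨(t, x), htK⟩ (hgK p)
    exact ⟨z, hzK, fun z' hz' => hz hz'⟩
  choose z hzK hzmax using hex
  set a : ℝ := w0 t x - φ t x with hadef
  have haM : ∀ p, a ≤ g p (z p) := by
    intro p
    have h1 : a ≤ g p (t, x) := by
      have := hge p t ht x
      simp only [g, hadef]
      linarith
    exact h1.trans (hzmax p (t, x) htK)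
  have hdomz : ∀ p, (z p).1 ∈ Ico (0:ℝ) T := fun p => (hKsub (hzK p)).1
  have hgmono : ∀ (q p : ℕ), q ≤ p → ∀ c ∈ K, g p c ≤ g q c := by
    intro q p hqp c hc
    have := hanti c.1 (hKsub hc).1 c.2 hqp
    simp only [g]; linarith
  -- the maximizers converge to (t,x)
  have hzconv : Tendsto z atTop (𝓝 (t, x)) := by
    apply tendsto_of_subseq_tendsto
    intro ns hns
    obtain ⟨c, hcK, ms, hms, hmsconv⟩ := hKc.tendsto_subseq (x := fun k => z (ns k))
      (fun k => hzK (ns k))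
    refine ⟨ms, ?_⟩
    have hcomp : Tendsto (fun k => ns (ms k)) atTop atTop :=
      hns.comp hms.tendsto_atTop
    -- a ≤ g q c for every q
    have hq : ∀ q : ℕ, a ≤ g q c := by
      intro q
      have hlim : Tendsto (fun k => g q (z (ns (ms k)))) atTop (𝓝 (g q c)) :=
        key q _ c hcK (fun k => hzK (ns (ms k))) hmsconv
      refine ge_of_tendsto hlim ?_
      filter_upwards [hcomp.eventually_ge_atTop q] with k hk
      exact (haM (ns (ms k))).trans (hgmono q (ns (ms k)) hk _ (hzK (ns (ms k))))
    have hac : a ≤ g 0 c := hq 0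
    have hlimq : Tendsto (fun q => g q c) atTop (𝓝 (w0 c.1 c.2 - φ c.1 c.2)) :=
      (hconv c.1 (hKsub hcK).1 c.2).sub_const _
    have ha0 : a ≤ w0 c.1 c.2 - φ c.1 c.2 := ge_of_tendsto' hlimq hq
    have hceq : c = (t, x) := by
      by_contra hne
      obtain ⟨⟨hc1, hc2⟩, hc3⟩ := id hcK
      have hsb : |c.1 - t| < δ := by
        have : t - r ≤ c.1 := le_trans (le_max_right _ _) hc1
        rw [abs_sub_lt_iff]; constructor <;> linarith
      have hyb : ‖c.2 - x‖ < δ := by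
        have : dist c.2 x ≤ r := hc3
        rw [← dist_eq_norm]; linarith
      have := hstrict c.1 (hKsub hcK).1 c.2 hsb hyb (by simpa using hne)
      simp only [g, hadef] at ha0
      linarith
    rw [hceq] at hmsconv
    exact hmsconv
  -- convergence of the maximal values
  have hMconv : Tendsto (fun p => g p (z p)) atTop (𝓝 a) := by
    rw [tendsto_order]
    constructor
    · intro b hb
      exact Eventually.of_forall fun p => lt_of_lt_of_le hb (haM p)
    · intro b hb
      have hε : (0:ℝ) < (b - a) / 2 := by linarith
      obtain ⟨q, hqv⟩ :=
        ((hconv t ht x).eventually (eventually_lt_nhds (by linarith [hε] :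
          w0 t x < w0 t x + (b - a) / 2))).exists
      have hlim : Tendsto (fun p => g q (z p)) atTop (𝓝 (g q (t, x))) :=
        key q z (t, x) htK hzK hzconv
      have hgqtx : g q (t, x) < b := by
        simp only [g, hadef] at *
        linarith
      filter_upwards [hlim.eventually (eventually_lt_nhds hgqtx),
        eventually_ge_atTop q] with p h1 h2
      exact lt_of_le_of_lt (hgmono q p h2 _ (hzK p)) h1
  have hφconv : Tendsto (fun p => φ (z p).1 (z p).2) atTop (𝓝 (φ t x)) := by
    have := (hφ (t, x) ⟨ht, trivial⟩).tendsto.comp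
      (tendsto_nhdsWithin_of_tendsto_nhds_of_eventually_within z hzconv
        (Eventually.of_forall fun p => hKsub (hzK p)))
    exact this
  refine ⟨fun p => (z p).1, fun p => (z p).2, fun p => hdomz p,
    (continuous_fst.tendsto _).comp hzconv, (continuous_snd.tendsto _).comp hzconv,
    ?_, ?_⟩
  · -- eventual local maximum
    filter_upwards [hzconv.eventually (Metric.closedBall_mem_nhds _ (half_pos hr0))]
      with p hp
    rw [Prod.dist_eq, max_le_iff] at hp
    obtain ⟨hp1, hp2⟩ := hp
    refine ⟨r / 2, half_pos hr0, fun s hs y hsd hyd => ?_⟩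
    have hmem : (s, y) ∈ K := by
      constructor
      · have h1 : |s - t| < r := by
          have := abs_sub_lt_iff.mp hsd
          rw [Real.dist_eq] at hp1
          have := abs_sub_le_iff.mp hp1
          rw [abs_sub_lt_iff]; constructor <;> linarith [this.1, this.2]
        have h2 := abs_sub_lt_iff.mp h1
        exact ⟨max_le hs.1 (by linarith [h2.2]), by linarith [h2.1]⟩
      · rw [Metric.mem_closedBall, dist_eq_norm]
        calc ‖y - x‖ ≤ ‖y - (z p).2‖ + ‖(z p).2 - x‖ := norm_sub_le_norm_sub_add_norm_sub _ _ _
          _ ≤ r := by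
              rw [dist_eq_norm] at hp2
              linarith
    exact hzmax p (s, y) hmem
  · -- convergence of values
    have hsum : Tendsto (fun p => g p (z p) + φ (z p).1 (z p).2) atTop
        (𝓝 (a + φ t x)) := hMconv.add hφconv
    have heq : (fun p => w p (z p).1 (z p).2) =
        fun p => g p (z p) + φ (z p).1 (z p).2 := by
      funext p; simp only [g]; ring
    have heq2 : a + φ t x = w0 t x := by simp only [hadef]; ring
    rw [heq, ← heq2]
    exact hsum
end
end
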